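/- arXiv:2603.21121 — 5 statements merged into one kernel-verified Lean document; each statement's English description precedes it below -/
import Mathlib

section
/- Let (X,d,μ) be a doubling metric measure space, 0 < s < 1, and let η : X → [0,1] be an L-Lipschitz function with L = 2/(r₁−r) for some 0 < r < r₁. Then there exists a constant C > 0 depending only on the doubling constant such that for every y ∈ X, ∫_X |η(y)−η(x)|/(μ(B_{x,y}) d(x,y)^s) dμ(x) ≤ C/(s(1−s)(r₁−r)^s), where B_{x,y} := B(x,d(x,y)) ∪ B(y,d(y,x)). -/
open MeasureTheory Metric
open scoped ENNReal

/-- The kernel `1/(μ(B_{x,y}) d(x,y)^s)` where `B_{x,y} = B(x,d(x,y)) ∪ B(y,d(y,x))`. -/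
noncomputable def ker {X : Type*} [MetricSpace X] [MeasurableSpace X]
    (μ : Measure X) (s : ℝ) (x y : X) : ℝ≥0∞ :=
  1 / (μ (ball x (dist x y) ∪ ball y (dist y x)) * ENNReal.ofReal (dist x y ^ s))

/-- Set integral bounded by constant times measure, for an arbitrary (possibly
non-measurable) set. -/
lemma my_setLIntegral_le {α : Type*} [MeasurableSpace α] (μ : Measure α)
    (f : α → ℝ≥0∞) (A : Set α) (c : ℝ≥0∞) (h : ∀ x ∈ A, f x ≤ c) :
    ∫⁻ x in A, f x ∂μ ≤ c * μ A := by
  rw [MeasureTheory.lintegral_def]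
  refine iSup_le fun g => iSup_le fun hg => ?_
  calc g.lintegral (μ.restrict A)
      = ∑ v ∈ g.range, v * (μ.restrict A) (g ⁻¹' {v}) := rfl
    _ ≤ ∑ v ∈ g.range, c * (μ.restrict A) (g ⁻¹' {v}) := by
        refine Finset.sum_le_sum fun v hv => ?_
        by_cases hne : (g ⁻¹' {v} ∩ A).Nonempty
        · obtain ⟨x, hx1, hx2⟩ := hne
          have hvc : v ≤ c := by
            simp only [Set.mem_preimage, Set.mem_singleton_iff] at hx1
            exact hx1 ▸ ((hg x).trans (h x hx2))
          exact mul_le_mul_left hvc _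
        · have h0 : (μ.restrict A) (g ⁻¹' {v}) = 0 := by
            rw [Measure.restrict_apply (g.measurableSet_fiber v),
              Set.not_nonempty_iff_eq_empty.mp hne]
            exact measure_empty
          simp [h0]
    _ = c * ∑ v ∈ g.range, (μ.restrict A) (g ⁻¹' {v}) := by rw [Finset.mul_sum]
    _ = c * μ A := by
        rw [g.sum_range_measure_preimage_singleton, Measure.restrict_apply_univ]

lemma my_rpow_lower {t : ℝ} (ht : 0 < t) (ht1 : t ≤ 1) : t / 4 ≤ 1 - (2:ℝ) ^ (-t) := by
  have h2t : (0:ℝ) < (2:ℝ) ^ t := Real.rpow_pos_of_pos two_pos t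
  have hle2 : (2:ℝ) ^ t ≤ 2 := by
    calc (2:ℝ) ^ t ≤ (2:ℝ) ^ (1:ℝ) :=
          Real.rpow_le_rpow_of_exponent_le one_le_two ht1
      _ = 2 := Real.rpow_one 2
  have hlog : (1:ℝ)/2 ≤ Real.log 2 := by
    have := Real.log_two_gt_d9; linarith
  have hexp : 1 + Real.log 2 * t ≤ (2:ℝ) ^ t := by
    rw [Real.rpow_def_of_pos two_pos]
    have := Real.add_one_le_exp (Real.log 2 * t)
    linarith
  have hnum : t / 2 ≤ (2:ℝ) ^ t - 1 := by nlinarith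
  have hneg : (2:ℝ) ^ (-t) = ((2:ℝ) ^ t)⁻¹ := Real.rpow_neg two_pos.le t
  rw [hneg]
  have key : t / 2 / 2 ≤ ((2:ℝ) ^ t - 1) / (2:ℝ) ^ t :=
    div_le_div₀ (by nlinarith) hnum h2t hle2
  have heq : ((2:ℝ) ^ t - 1) / (2:ℝ) ^ t = 1 - ((2:ℝ)^t)⁻¹ := by field_simp
  linarith [heq ▸ key]

lemma my_geom_bound {t : ℝ} (ht : 0 < t) (ht1 : t ≤ 1) :
    (1 - ENNReal.ofReal ((2:ℝ) ^ (-t)))⁻¹ ≤ ENNReal.ofReal (4 / t) := by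
  have h2 : (1:ℝ≥0∞) - ENNReal.ofReal ((2:ℝ) ^ (-t))
      = ENNReal.ofReal (1 - (2:ℝ) ^ (-t)) := by
    rw [ENNReal.ofReal_sub _ (Real.rpow_nonneg two_pos.le _), ENNReal.ofReal_one]
  rw [h2, ← ENNReal.ofReal_inv_of_pos (by nlinarith [my_rpow_lower ht ht1])]
  apply ENNReal.ofReal_le_ofReal
  have hlow := my_rpow_lower ht ht1
  rw [inv_le_iff_one_le_mul₀ (by nlinarith), div_mul_eq_mul_div, le_div_iff₀ ht]
  nlinarith

/-- Nonlocal energy density estimate for a `2/(r₁−r)`-Lipschitz cutoff `η` with `0 ≤ η ≤ 1`: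
there is `C > 0` depending only on the doubling constant such that for every `y`,
`∫_X |η(y)−η(x)|/(μ(B_{x,y}) d(x,y)^s) dμ(x) ≤ C/(s(1−s)(r₁−r)^s)`. -/
theorem stmt5 {X : Type*} [MetricSpace X] [MeasurableSpace X] (μ : Measure X)
    (Cμ : ℝ) (hC : 1 ≤ Cμ)
    (hdoub : ∀ (x : X) (r : ℝ), 0 < r →
      0 < μ (ball x r) ∧ μ (ball x r) < ⊤ ∧
        μ (ball x (2 * r)) ≤ ENNReal.ofReal Cμ * μ (ball x r)) :
    ∃ C > (0 : ℝ), ∀ (s r r₁ : ℝ) (η : X → ℝ) (y : X),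
      0 < s → s < 1 → 0 < r → r < r₁ →
      LipschitzWith (Real.toNNReal (2 / (r₁ - r))) η →
      (∀ x, η x ∈ Set.Icc (0 : ℝ) 1) →
      ∫⁻ x, ENNReal.ofReal |η y - η x| * ker μ s x y ∂μ
        ≤ ENNReal.ofReal (C / (s * (1 - s) * (r₁ - r) ^ s)) := by
  refine ⟨16 * Cμ, by linarith, ?_⟩
  intro s r r₁ η y hs hs1 hr hrr₁ hlip hicc
  set δ : ℝ := r₁ - r with hδdef
  have hδ : 0 < δ := by simp only [hδdef]; linarith
  have hs1' : (0:ℝ) < 1 - s := by linarith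
  set f : X → ℝ≥0∞ := fun x => ENNReal.ofReal |η y - η x| * ker μ s x y with hfdef
  set a : ℤ → ℝ := fun j => (2:ℝ) ^ (j:ℝ) * δ with hadef
  have haj : ∀ j, 0 < a j := fun j => mul_pos (Real.rpow_pos_of_pos two_pos _) hδ
  set A : ℤ → Set X := fun j => {x | a j ≤ dist x y ∧ dist x y < 2 * a j} with hAdef
  -- numerator bound
  have hnum : ∀ x : X, |η y - η x| ≤ min 1 (2 / δ * dist x y) := by
    intro x
    refine le_min ?_ ?_
    · rcases hicc x with ⟨h1, h2⟩; rcases hicc y with ⟨h3, h4⟩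
      rw [abs_le]; constructor <;> linarith
    · have hh := hlip.dist_le_mul y x
      rw [Real.dist_eq] at hh
      calc |η y - η x| ≤ (Real.toNNReal (2 / δ) : ℝ) * dist y x := hh
        _ = 2 / δ * dist x y := by
            rw [Real.coe_toNNReal _ (le_of_lt (div_pos two_pos hδ)), dist_comm]
  -- covering
  have hz : ∀ m : ℤ, (2:ℝ) ^ m = (2:ℝ) ^ (m:ℝ) := fun m => (Real.rpow_intCast 2 m).symm
  have hcov : ({y} : Set X) ∪ (⋃ j, A j) = Set.univ := by
    ext x
    simp only [Set.mem_union, Set.mem_singleton_iff, Set.mem_iUnion, Set.mem_univ, iff_true]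
    rcases eq_or_ne x y with hxy | hxy
    · exact Or.inl hxy
    · have hd : 0 < dist x y := dist_pos.mpr hxy
      obtain ⟨n, hn1, hn2⟩ := exists_mem_Ico_zpow (div_pos hd hδ) one_lt_two
      refine Or.inr ⟨n, ?_, ?_⟩
      · show a n ≤ dist x y
        have := (le_div_iff₀ hδ).mp hn1
        rw [hz n] at this
        exact this
      · show dist x y < 2 * a n
        have := (div_lt_iff₀ hδ).mp hn2
        rw [zpow_add_one₀ (two_ne_zero) n, hz n] at this
        calc dist x y < (2:ℝ) ^ (n:ℝ) * 2 * δ := this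
          _ = 2 * a n := by rw [hadef]; ring
  -- splitting
  have hsplit : ∫⁻ x, f x ∂μ
      ≤ ∫⁻ x in ({y} : Set X), f x ∂μ + ∑' j : ℤ, ∫⁻ x in A j, f x ∂μ := by
    conv_lhs => rw [← setLIntegral_univ f, ← hcov]
    exact le_trans (lintegral_union_le _ _ _)
      (add_le_add_right (lintegral_iUnion_le _ _) _)
  -- singleton contributes zero
  have hsing : ∫⁻ x in ({y} : Set X), f x ∂μ = 0 := by
    have hle : ∫⁻ x in ({y} : Set X), f x ∂μ ≤ 0 * μ {y} := by
      apply my_setLIntegral_le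
      intro x hx
      rw [Set.mem_singleton_iff] at hx
      simp [hfdef, hx]
    simpa using hle
  -- constants
  set K₁ : ℝ≥0∞ := ENNReal.ofReal Cμ * ENNReal.ofReal ((δ ^ s)⁻¹) with hK₁def
  set W : ℤ → ℝ≥0∞ := fun j =>
    ENNReal.ofReal (min 1 (4 * (2:ℝ) ^ (j:ℝ)) * ((2:ℝ) ^ ((j:ℝ) * s))⁻¹) with hWdef
  -- per-annulus bound
  have hterm : ∀ j : ℤ, ∫⁻ x in A j, f x ∂μ ≤ K₁ * W j := by
    intro j
    obtain ⟨hb0, hbtop, hbdoub⟩ := hdoub y (a j) (haj j)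
    set b : ℝ≥0∞ := μ (ball y (a j)) with hbdef
    set t : ℝ≥0∞ := ENNReal.ofReal ((a j) ^ s) with htdef
    have hts : (0:ℝ) < (a j) ^ s := Real.rpow_pos_of_pos (haj j) s
    have ht0 : t ≠ 0 := by
      rw [htdef, ne_eq, ENNReal.ofReal_eq_zero, not_le]; exact hts
    have httop : t ≠ ⊤ := ENNReal.ofReal_ne_top
    set N : ℝ≥0∞ := ENNReal.ofReal (min 1 (4 * (2:ℝ) ^ (j:ℝ))) with hNdef
    have hpt : ∀ x ∈ A j, f x ≤ N * (b * t)⁻¹ := by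
      rintro x ⟨hd1, hd2⟩
      have hker : ker μ s x y ≤ (b * t)⁻¹ := by
        rw [ker, one_div]
        apply ENNReal.inv_le_inv.mpr
        refine mul_le_mul' ?_ ?_
        · exact measure_mono (Set.Subset.trans
            (ball_subset_ball (by rw [dist_comm]; exact hd1)) Set.subset_union_right)
        · exact ENNReal.ofReal_le_ofReal (Real.rpow_le_rpow (haj j).le hd1 hs.le)
      have hnum' : ENNReal.ofReal |η y - η x| ≤ N := by
        apply ENNReal.ofReal_le_ofReal
        refine le_trans (hnum x) (min_le_min le_rfl ?_)
        calc 2 / δ * dist x y ≤ 2 / δ * (2 * a j) :=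
              mul_le_mul_of_nonneg_left hd2.le (by positivity)
          _ = 4 * (2:ℝ) ^ (j:ℝ) := by
              simp only [hadef]; field_simp; ring
      exact mul_le_mul' hnum' hker
    have hAsub : μ (A j) ≤ ENNReal.ofReal Cμ * b := by
      refine le_trans (measure_mono ?_) hbdoub
      intro x hx
      exact mem_ball.mpr hx.2
    have hbb : b⁻¹ * b = 1 := ENNReal.inv_mul_cancel (ne_of_gt hb0) (ne_of_lt hbtop)
    calc ∫⁻ x in A j, f x ∂μ
        ≤ (N * (b * t)⁻¹) * μ (A j) := my_setLIntegral_le μ f (A j) _ hpt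
      _ ≤ (N * (b * t)⁻¹) * (ENNReal.ofReal Cμ * b) := mul_le_mul_right hAsub _
      _ = (N * ENNReal.ofReal Cμ * t⁻¹) * (b⁻¹ * b) := by
          rw [ENNReal.mul_inv (Or.inr httop) (Or.inr ht0)]
          ring
      _ = N * ENNReal.ofReal Cμ * t⁻¹ := by rw [hbb, mul_one]
      _ = K₁ * W j := by
          have haexp : ((a j) ^ s)⁻¹ = ((2:ℝ)^((j:ℝ)*s))⁻¹ * (δ^s)⁻¹ := by
            simp only [hadef]
            rw [Real.mul_rpow (Real.rpow_nonneg two_pos.le _) hδ.le,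
              ← Real.rpow_mul two_pos.le, mul_inv]
          simp only [hWdef, hK₁def, hNdef]
          rw [htdef, ← ENNReal.ofReal_inv_of_pos hts, haexp,
            ENNReal.ofReal_mul (by positivity),
            ENNReal.ofReal_mul (le_min zero_le_one (by positivity))]
          ring
  -- sum of the weights
  have hsum : ∑' j : ℤ, W j ≤ ENNReal.ofReal (16 / (s * (1 - s))) := by
    have hsummW : ∑' j : ℤ, W j = (∑' n : ℕ, W n) + ∑' n : ℕ, W (-(n+1)) :=
      tsum_of_nat_of_neg_add_one ENNReal.summable ENNReal.summable
    have hpos : ∑' n : ℕ, W (n:ℤ) ≤ ENNReal.ofReal (4 / s) := by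
      have hWn : ∀ n : ℕ, W (n:ℤ) ≤ (ENNReal.ofReal ((2:ℝ)^(-s)))^n := by
        intro n
        have hc : (((n:ℤ)):ℝ) = (n:ℝ) := by push_cast; ring
        have h2 : ((2:ℝ)^(-s))^n = ((2:ℝ)^((n:ℝ)*s))⁻¹ := by
          rw [← Real.rpow_natCast ((2:ℝ)^(-s)) n, ← Real.rpow_mul two_pos.le,
            ← Real.rpow_neg two_pos.le]
          ring_nf
        have h1 : min 1 (4 * (2:ℝ)^(((n:ℤ)):ℝ)) * ((2:ℝ)^((((n:ℤ)):ℝ)*s))⁻¹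
            ≤ ((2:ℝ)^(-s))^n := by
          rw [hc, h2]
          exact mul_le_of_le_one_left
            (inv_nonneg.mpr (Real.rpow_nonneg two_pos.le _)) (min_le_left _ _)
        calc W (n:ℤ) ≤ ENNReal.ofReal (((2:ℝ)^(-s))^n) := ENNReal.ofReal_le_ofReal h1
          _ = (ENNReal.ofReal ((2:ℝ)^(-s)))^n :=
              ENNReal.ofReal_pow (Real.rpow_nonneg two_pos.le _) n
      calc ∑' n:ℕ, W (n:ℤ) ≤ ∑' n:ℕ, (ENNReal.ofReal ((2:ℝ)^(-s)))^n :=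
            ENNReal.tsum_le_tsum hWn
        _ = (1 - ENNReal.ofReal ((2:ℝ)^(-s)))⁻¹ := ENNReal.tsum_geometric _
        _ ≤ ENNReal.ofReal (4 / s) := my_geom_bound hs hs1.le
    have hnegsum : ∑' n : ℕ, W (-(n+1)) ≤ ENNReal.ofReal (16 / (1 - s)) := by
      have hWn : ∀ n : ℕ, W (-(n+1))
          ≤ ENNReal.ofReal 4 * (ENNReal.ofReal ((2:ℝ)^(-(1-s))))^n := by
        intro n
        have hc : ((-((n:ℤ)+1) : ℤ) : ℝ) = -((n:ℝ)+1) := by push_cast; ring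
        have e1 : ((2:ℝ)^((-((n:ℝ)+1))*s))⁻¹ = (2:ℝ)^(((n:ℝ)+1)*s) := by
          rw [← Real.rpow_neg two_pos.le]
          ring_nf
        have e2 : ((2:ℝ)^(-(1-s)))^n = (2:ℝ)^(-(1-s)*(n:ℝ)) := by
          rw [← Real.rpow_natCast ((2:ℝ)^(-(1-s))) n, ← Real.rpow_mul two_pos.le]
        have hle : min 1 (4 * (2:ℝ)^((-((n:ℤ)+1) : ℤ):ℝ)) * ((2:ℝ)^(((-((n:ℤ)+1) : ℤ):ℝ)*s))⁻¹
            ≤ 4 * ((2:ℝ)^(-(1-s)))^n := by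
          rw [hc, e1]
          calc min 1 (4 * (2:ℝ)^(-((n:ℝ)+1))) * (2:ℝ)^(((n:ℝ)+1)*s)
              ≤ (4 * (2:ℝ)^(-((n:ℝ)+1))) * (2:ℝ)^(((n:ℝ)+1)*s) :=
                mul_le_mul_of_nonneg_right (min_le_right _ _)
                  (Real.rpow_nonneg two_pos.le _)
            _ = 4 * (2:ℝ)^(-((n:ℝ)+1) + ((n:ℝ)+1)*s) := by
                rw [mul_assoc, ← Real.rpow_add two_pos]
            _ ≤ 4 * ((2:ℝ)^(-(1-s)))^n := by
                rw [e2]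
                refine mul_le_mul_of_nonneg_left ?_ (by norm_num)
                apply Real.rpow_le_rpow_of_exponent_le one_le_two
                nlinarith [Nat.cast_nonneg (α := ℝ) n]
        calc W (-(n+1)) ≤ ENNReal.ofReal (4 * ((2:ℝ)^(-(1-s)))^n) :=
              ENNReal.ofReal_le_ofReal hle
          _ = ENNReal.ofReal 4 * (ENNReal.ofReal ((2:ℝ)^(-(1-s))))^n := by
              rw [ENNReal.ofReal_mul (by norm_num),
                ENNReal.ofReal_pow (Real.rpow_nonneg two_pos.le _)]
      calc ∑' n:ℕ, W (-(n+1))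
          ≤ ∑' n:ℕ, ENNReal.ofReal 4 * (ENNReal.ofReal ((2:ℝ)^(-(1-s))))^n :=
            ENNReal.tsum_le_tsum hWn
        _ = ENNReal.ofReal 4 * (1 - ENNReal.ofReal ((2:ℝ)^(-(1-s))))⁻¹ := by
            rw [ENNReal.tsum_mul_left, ENNReal.tsum_geometric]
        _ ≤ ENNReal.ofReal 4 * ENNReal.ofReal (4/(1-s)) :=
            mul_le_mul_right (my_geom_bound hs1' (by linarith)) _
        _ = ENNReal.ofReal (16/(1-s)) := by
            rw [← ENNReal.ofReal_mul (by norm_num)]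
            congr 1
            rw [← mul_div_assoc]
            norm_num
    rw [hsummW]
    calc (∑' n:ℕ, W (n:ℤ)) + ∑' n:ℕ, W (-(n+1))
        ≤ ENNReal.ofReal (4/s) + ENNReal.ofReal (16/(1-s)) := add_le_add hpos hnegsum
      _ = ENNReal.ofReal (4/s + 16/(1-s)) :=
          (ENNReal.ofReal_add (by positivity) (by positivity)).symm
      _ ≤ ENNReal.ofReal (16/(s*(1-s))) := by
          apply ENNReal.ofReal_le_ofReal
          rw [div_add_div _ _ (ne_of_gt hs) (ne_of_gt hs1'),
            div_le_div_iff₀ (by positivity) (by positivity)]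
          nlinarith [mul_nonneg (mul_nonneg hs.le hs1'.le) hs1'.le]
  -- final assembly
  have hfinal : ∫⁻ x, f x ∂μ ≤ K₁ * ENNReal.ofReal (16/(s*(1-s))) := by
    calc ∫⁻ x, f x ∂μ
        ≤ ∫⁻ x in ({y}:Set X), f x ∂μ + ∑' j : ℤ, ∫⁻ x in A j, f x ∂μ := hsplit
      _ ≤ 0 + ∑' j : ℤ, K₁ * W j :=
          add_le_add (le_of_eq hsing) (ENNReal.tsum_le_tsum hterm)
      _ = K₁ * ∑' j : ℤ, W j := by rw [zero_add, ENNReal.tsum_mul_left]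
      _ ≤ K₁ * ENNReal.ofReal (16/(s*(1-s))) := mul_le_mul_right hsum _
  refine le_trans hfinal ?_
  have hds : (0:ℝ) < δ ^ s := Real.rpow_pos_of_pos hδ s
  have hCpos : (0:ℝ) < Cμ := by linarith
  rw [hK₁def, ← ENNReal.ofReal_mul hCpos.le,
    ← ENNReal.ofReal_mul (by positivity)]
  apply ENNReal.ofReal_le_ofReal
  apply le_of_eq
  field_simp
end

section
/- Let (X,d,μ) be a complete connected doubling metric measure space and 0 < s < 1. Then for every z ∈ X and almost every r > 0 (with respect to Lebesgue measure on (0,∞)), the ball B(z,r) has finite nonlocal s-perimeter: P_s(B(z,r)) := ∫_{B(z,r)} ∫_{X∖B(z,r)} 1/(μ(B_{x,y}) d(x,y)^s) dμ(x) dμ(y) < ∞. -/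
open MeasureTheory Metric
open scoped ENNReal

/-- The nonlocal `s`-perimeter `P_s(E) = ∫_E ∫_{X∖E} dμ dμ /(μ(B_{x,y}) d(x,y)^s)`. -/
noncomputable def sPerimeter {X : Type*} [MetricSpace X] [MeasurableSpace X]
    (μ : Measure X) (s : ℝ) (E : Set X) : ℝ≥0∞ :=
  ∫⁻ y in E, ∫⁻ x in Eᶜ, ker μ s x y ∂μ ∂μ

open Set

section Aux

variable {X : Type*} [MeasurableSpace X]

/-- Robust layered bound for a set-lintegral, valid without any measurability of the
sets or the integrand. -/
lemma lintegral_le_layered (m : Measure X) (B : Set X) (W : ℕ → Set X)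
    (F : X → ℝ≥0∞) (b : ℕ → ℝ≥0∞) (hb : Monotone b)
    (hWB : ∀ j, W j ⊆ B) (hcover : B ⊆ ⋃ j, W j)
    (hFb : ∀ j, ∀ y ∈ W (j + 1), F y ≤ b j) (hWmono : Monotone W) (hfin : m B ≠ ⊤) :
    ∫⁻ y in B, F y ∂m ≤ b 0 * m B + ∑' j, (b (j + 1) - b j) * (m B - m (W (j + 1))) := by
  set ν := m.restrict B with hνdef
  have hνuniv : ν Set.univ = m B := Measure.restrict_apply_univ _
  have hνfin : ν Set.univ ≠ ⊤ := by rw [hνuniv]; exact hfin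
  rw [MeasureTheory.lintegral_def]
  apply iSup₂_le
  intro ψ hψ
  -- the measurable super-level sets
  set E : ℕ → Set X := fun j => ψ ⁻¹' (Set.Ioi (b j)) with hEdef
  have hE : ∀ j, MeasurableSet (E j) := fun j => ψ.measurableSet_preimage _
  have hmemE : ∀ j x, x ∈ E j ↔ b j < ψ x := fun j x => Iff.rfl
  -- the measurable majorant
  set g : X → ℝ≥0∞ := fun x => b 0 + ∑' j, (E j).indicator (fun _ => b (j + 1) - b j) x
    with hgdef
  have hgmeas : Measurable g := by
    apply Measurable.add measurable_const
    exact Measurable.ennreal_tsum fun j => measurable_const.indicator (hE j)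
  -- pointwise bound on B
  have hg : ∀ x ∈ B, ψ x ≤ g x := by
    intro x hx
    rcases Set.mem_iUnion.1 (hcover hx) with ⟨k, hk⟩
    have hxk : ψ x ≤ b k := by
      cases k with
      | zero => exact (hψ x).trans (hFb 0 x (hWmono (Nat.zero_le 1) hk))
      | succ n => exact (hψ x).trans ((hFb n x hk).trans (hb (Nat.le_succ n)))
    have hex : ∃ j, ψ x ≤ b j := ⟨k, hxk⟩
    set J := Nat.find hex with hJdef
    have hJ : ψ x ≤ b J := Nat.find_spec hex
    have hlt : ∀ j < J, x ∈ E j := fun j hj =>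
      lt_of_not_ge (Nat.find_min hex hj)
    have htel : ∀ n, b n ≤ b 0 + ∑ j ∈ Finset.range n, (b (j + 1) - b j) := by
      intro n
      induction n with
      | zero => simp
      | succ n ih =>
          rw [Finset.sum_range_succ, ← add_assoc, add_comm (b 0 + _) _]
          calc b (n + 1) = (b (n + 1) - b n) + b n :=
                (tsub_add_cancel_of_le (hb (Nat.le_succ n))).symm
            _ ≤ (b (n + 1) - b n) + (b 0 + ∑ j ∈ Finset.range n, (b (j + 1) - b j)) :=
                add_le_add_right ih _
            _ = _ := by ring
    calc ψ x ≤ b 0 + ∑ j ∈ Finset.range J, (b (j + 1) - b j) := hJ.trans (htel J)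
      _ ≤ g x := by
          apply add_le_add_right
          have heq : ∀ j ∈ Finset.range J,
              (b (j + 1) - b j) = (E j).indicator (fun _ => b (j + 1) - b j) x := by
            intro j hj
            rw [Set.indicator_of_mem (hlt j (Finset.mem_range.1 hj))]
          rw [Finset.sum_congr rfl heq]
          exact ENNReal.sum_le_tsum _
  -- a.e. bound wrt ν
  have hae : (fun x => ψ x) ≤ᵐ[ν] g := by
    rw [Filter.EventuallyLE, Filter.eventually_iff, mem_ae_iff]
    have hSm : MeasurableSet {x | ψ x ≤ g x}ᶜ := by
      have : MeasurableSet {x | ψ x ≤ g x} := measurableSet_le ψ.measurable hgmeas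
      exact this.compl
    rw [hνdef, Measure.restrict_apply hSm]
    have : {x | ψ x ≤ g x}ᶜ ∩ B = ∅ := by
      ext x; simp only [Set.mem_inter_iff, Set.mem_compl_iff, Set.mem_setOf_eq,
        Set.mem_empty_iff_false, iff_false, not_and]
      intro hxnot hxB; exact hxnot (hg x hxB)
    rw [this, measure_empty]
  -- compute the integral of g
  have hgint : ∫⁻ x, g x ∂ν ≤ b 0 * m B + ∑' j, (b (j + 1) - b j) * (m B - m (W (j + 1))) := by
    rw [hgdef]
    rw [lintegral_add_left measurable_const, lintegral_const, hνuniv]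
    apply add_le_add_right
    rw [lintegral_tsum (fun j => (measurable_const.indicator (hE j)).aemeasurable)]
    apply ENNReal.tsum_le_tsum
    intro j
    rw [lintegral_indicator (hE j), setLIntegral_const]
    apply mul_le_mul_right
    -- ν (E j) ≤ m B - m (W (j+1))
    have hdisj : E j ∩ W (j + 1) = ∅ := by
      ext x
      simp only [Set.mem_inter_iff, Set.mem_empty_iff_false, iff_false, not_and]
      intro hxE hxW
      exact absurd ((hψ x).trans (hFb j x hxW)) (not_le.2 hxE)
    have hsub : W (j + 1) ⊆ (E j)ᶜ := fun x hx => by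
      intro hxE; rw [← Set.mem_empty_iff_false x, ← hdisj]; exact ⟨hxE, hx⟩
    have h1 : ν (E j) = ν Set.univ - ν ((E j)ᶜ) := by
      have := measure_compl (hE j).compl (ne_top_of_le_ne_top hνfin (measure_mono (Set.subset_univ _)))
      rwa [compl_compl] at this
    have h2 : m (W (j + 1)) ≤ ν ((E j)ᶜ) := by
      calc m (W (j + 1)) = (m.restrict (W (j + 1))) (W (j + 1)) :=
            (Measure.restrict_apply_self _ _).symm
        _ ≤ ν (W (j + 1)) := by
            exact Measure.restrict_mono (hWB (j + 1)) le_rfl _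
        _ ≤ ν ((E j)ᶜ) := measure_mono hsub
    rw [h1, hνuniv]
    exact tsub_le_tsub le_rfl h2
  calc ψ.lintegral ν = ∫⁻ x, ψ x ∂ν := (SimpleFunc.lintegral_eq_lintegral ψ ν).symm
    _ ≤ ∫⁻ x, g x ∂ν := lintegral_mono_ae hae
    _ ≤ _ := hgint

/-- Robust constant bound on a set-lintegral: no measurability needed. -/
lemma setLIntegral_le_const_mul (m : Measure X) (A : Set X) (F : X → ℝ≥0∞) (c : ℝ≥0∞)
    (h : ∀ x ∈ A, F x ≤ c) (hfin : m A ≠ ⊤) :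
    ∫⁻ x in A, F x ∂m ≤ c * m A := by
  have := lintegral_le_layered m A (fun j => if j = 0 then ∅ else A) F (fun _ => c)
    monotone_const (fun j => by by_cases hj : j = 0 <;> simp [hj]) (fun x hx => Set.mem_iUnion.2 ⟨1, by simpa⟩)
    (fun j y hy => h y (by simp only [Nat.succ_ne_zero, if_false] at hy; exact hy)) ?_ hfin
  · simpa using this
  · intro i j hij x hx
    simp only at hx ⊢
    split at hx
    · exact absurd hx (Set.notMem_empty x)
    · split
      · omega
      · exact hx

/-- Translation estimate for monotone `G`. -/
lemma lintegral_tsub_translate (G : ℝ → ℝ≥0∞) (hG : Monotone G) (a c : ℝ) (hac : a ≤ c)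
    (ε : ℝ) (hε : 0 ≤ ε) (hfin : G c ≠ ⊤) :
    ∫⁻ r in Set.Ioc a c, (G r - G (r - ε)) ∂volume ≤ G c * ENNReal.ofReal ε := by
  have hGm : Measurable G := hG.measurable
  have hg : Measurable fun r : ℝ => G (r - ε) := hGm.comp (measurable_id.sub measurable_const)
  have hvol : volume (Set.Ioc a c) ≠ ⊤ := by
    rw [Real.volume_Ioc]; exact ENNReal.ofReal_ne_top
  have hgle : ∀ r ∈ Set.Ioc a c, G (r - ε) ≤ G c := fun r hr =>
    hG (by linarith [hr.2])
  have hgfin : ∫⁻ r in Set.Ioc a c, G (r - ε) ∂volume ≠ ⊤ := by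
    refine ne_top_of_le_ne_top ?_ (setLIntegral_le_const_mul volume _ _ (G c) hgle hvol)
    exact ENNReal.mul_ne_top hfin hvol
  have hle : (fun r : ℝ => G (r - ε)) ≤ᵐ[volume.restrict (Set.Ioc a c)] G :=
    Filter.Eventually.of_forall fun r => hG (by linarith)
  rw [lintegral_sub' hg.aemeasurable hgfin hle]
  rw [tsub_le_iff_right]
  -- translation identity
  have htrans : ∫⁻ r in Set.Ioc a c, G (r - ε) ∂volume
      = ∫⁻ u in Set.Ioc (a - ε) (c - ε), G u ∂volume := by
    rw [← lintegral_indicator measurableSet_Ioc, ← lintegral_indicator measurableSet_Ioc]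
    have hcong : ∀ r : ℝ, (Set.Ioc a c).indicator (fun r => G (r - ε)) r
        = (Set.Ioc (a - ε) (c - ε)).indicator G (r + (-ε)) := by
      intro r
      by_cases hr : r ∈ Set.Ioc a c
      · rw [Set.indicator_of_mem hr, Set.indicator_of_mem (by
          simp only [Set.mem_Ioc] at hr ⊢
          constructor <;> linarith [hr.1, hr.2])]
        norm_num [sub_eq_add_neg]
      · rw [Set.indicator_of_notMem hr, Set.indicator_of_notMem (by
          intro hmem
          apply hr
          simp only [Set.mem_Ioc] at hmem ⊢
          constructor <;> linarith [hmem.1, hmem.2])]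
    rw [show (fun r : ℝ => (Set.Ioc a c).indicator (fun r => G (r - ε)) r)
        = fun r : ℝ => (Set.Ioc (a - ε) (c - ε)).indicator G (r + (-ε)) from funext hcong]
    exact lintegral_add_right_eq_self _ (-ε)
  rw [htrans]
  have hcover : Set.Ioc a c ⊆ Set.Ioc (a - ε) (c - ε) ∪ Set.Ioc (c - ε) c := by
    intro r hr
    rcases le_or_gt r (c - ε) with h | h
    · exact Or.inl ⟨by linarith [hr.1], h⟩
    · exact Or.inr ⟨h, hr.2⟩
  calc ∫⁻ r in Set.Ioc a c, G r ∂volume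
      ≤ ∫⁻ r in Set.Ioc (a - ε) (c - ε) ∪ Set.Ioc (c - ε) c, G r ∂volume :=
        lintegral_mono_set hcover
    _ ≤ ∫⁻ r in Set.Ioc (a - ε) (c - ε), G r ∂volume
        + ∫⁻ r in Set.Ioc (c - ε) c, G r ∂volume := lintegral_union_le _ _ _
    _ ≤ ∫⁻ r in Set.Ioc (a - ε) (c - ε), G r ∂volume + G c * ENNReal.ofReal ε := by
        apply add_le_add_right
        have := setLIntegral_le_const_mul volume (Set.Ioc (c - ε) c) G (G c)
          (fun r hr => hG hr.2) (by rw [Real.volume_Ioc]; exact ENNReal.ofReal_ne_top)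
        refine this.trans ?_
        rw [Real.volume_Ioc, show c - (c - ε) = ε by ring]
    _ = G c * ENNReal.ofReal ε + ∫⁻ r in Set.Ioc (a - ε) (c - ε), G r ∂volume := add_comm _ _

/-- The key real-number identity, proved by induction. -/
lemma real_geom_id (R s : ℝ) (hR : 0 < R) (j : ℕ) :
    (R * (2⁻¹:ℝ) ^ (j + 3)) ^ (-s) * (R * (2⁻¹:ℝ) ^ (j + 1))
      = (R * (2⁻¹:ℝ) ^ (3:ℕ)) ^ (-s) * (R * 2⁻¹) * ((2:ℝ) ^ (s - 1)) ^ j := by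
  have h2 : (0:ℝ) < 2 := two_pos
  have hkey : ((2⁻¹:ℝ)) ^ (-s) * 2⁻¹ = (2:ℝ) ^ (s - 1) := by
    rw [Real.inv_rpow h2.le, ← Real.rpow_neg h2.le, neg_neg,
      show (2⁻¹:ℝ) = (2:ℝ) ^ (-(1:ℝ)) by rw [Real.rpow_neg_one],
      ← Real.rpow_add h2]
    ring_nf
  induction j with
  | zero => simp
  | succ j ih =>
      have e1 : (2⁻¹:ℝ) ^ (j + 1 + 3) = (2⁻¹:ℝ) ^ (j + 3) * 2⁻¹ := by ring
      have e2 : (2⁻¹:ℝ) ^ (j + 1 + 1) = (2⁻¹:ℝ) ^ (j + 1) * 2⁻¹ := by ring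
      have e3 : R * ((2⁻¹:ℝ) ^ (j + 3) * 2⁻¹) = (R * (2⁻¹:ℝ) ^ (j + 3)) * 2⁻¹ := by ring
      rw [e1, e2, e3, Real.mul_rpow (by positivity) (by positivity)]
      calc (R * (2⁻¹:ℝ) ^ (j + 3)) ^ (-s) * (2⁻¹:ℝ) ^ (-s) * (R * ((2⁻¹:ℝ) ^ (j + 1) * 2⁻¹))
          = ((R * (2⁻¹:ℝ) ^ (j + 3)) ^ (-s) * (R * (2⁻¹:ℝ) ^ (j + 1)))
            * ((2⁻¹:ℝ) ^ (-s) * 2⁻¹) := by ring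
        _ = (R * (2⁻¹:ℝ) ^ (3:ℕ)) ^ (-s) * (R * 2⁻¹) * ((2:ℝ) ^ (s - 1)) ^ j
            * (2:ℝ) ^ (s - 1) := by rw [ih, hkey]
        _ = _ := by ring


end Aux

section Metric

variable {X : Type*} [MetricSpace X] [MeasurableSpace X]

/-- Step A: the inner integral over `{x | δ ≤ dist x y}` is at most
`Cμ * (1 - 2^{-s})⁻¹ * δ^{-s}`. -/
lemma inner_bound (μ : Measure X) (Cμ : ℝ)
    (hdoub : ∀ (x : X) (r : ℝ), 0 < r →
      0 < μ (ball x r) ∧ μ (ball x r) < ⊤ ∧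
        μ (ball x (2 * r)) ≤ ENNReal.ofReal Cμ * μ (ball x r))
    (s : ℝ) (hs : 0 < s) (y : X) (δ : ℝ) (hδ : 0 < δ) :
    ∫⁻ x in {x | δ ≤ dist x y}, ker μ s x y ∂μ ≤
      ENNReal.ofReal Cμ * (1 - ENNReal.ofReal ((2:ℝ) ^ (-s)))⁻¹ *
        (ENNReal.ofReal (δ ^ s))⁻¹ := by
  set A : ℕ → Set X := fun k => {x | 2 ^ k * δ ≤ dist x y ∧ dist x y < 2 ^ (k + 1) * δ}
    with hAdef
  -- covering
  have hcov : {x | δ ≤ dist x y} ⊆ ⋃ k : ℕ, A k := by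
    intro x hx
    simp only [Set.mem_setOf_eq] at hx
    have hex : ∃ k : ℕ, dist x y < 2 ^ (k + 1) * δ := by
      obtain ⟨k, hk⟩ := pow_unbounded_of_one_lt (dist x y / δ) (one_lt_two (α := ℝ))
      refine ⟨k, ?_⟩
      rw [div_lt_iff₀ hδ] at hk
      exact hk.trans_le (by
        have : (2:ℝ) ^ k ≤ 2 ^ (k + 1) := by
          apply pow_le_pow_right₀ one_le_two (Nat.le_succ k)
        nlinarith)
    refine Set.mem_iUnion.2 ⟨Nat.find hex, ?_, Nat.find_spec hex⟩
    rcases Nat.eq_zero_or_pos (Nat.find hex) with h0 | hpos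
    · rw [h0]; simpa using hx
    · have := Nat.find_min hex (Nat.sub_lt hpos one_pos)
      push_neg at this
      have h1 : Nat.find hex - 1 + 1 = Nat.find hex := Nat.succ_pred_eq_of_pos hpos
      rw [h1] at this
      exact this
  refine le_trans (lintegral_mono_set hcov) ?_
  refine le_trans (lintegral_iUnion_le _ _) ?_
  -- term-wise bound
  have hterm : ∀ k : ℕ, ∫⁻ x in A k, ker μ s x y ∂μ ≤
      ENNReal.ofReal Cμ * (ENNReal.ofReal ((2 ^ k * δ) ^ s))⁻¹ := by
    intro k
    set t : ℝ := 2 ^ k * δ with htdef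
    have ht : 0 < t := by positivity
    obtain ⟨hB0, hBfin, hBdoub⟩ := hdoub y t ht
    set Bt := μ (ball y t) with hBtdef
    have hAball : A k ⊆ ball y (2 * t) := by
      intro x hx
      rcases hx with ⟨_, h2⟩
      rw [mem_ball]
      calc dist x y < 2 ^ (k + 1) * δ := h2
        _ = 2 * t := by rw [htdef]; ring
    have hAfin : μ (A k) ≠ ⊤ :=
      ne_top_of_le_ne_top (by
        exact ne_of_lt (lt_of_le_of_lt hBdoub (by
          exact ENNReal.mul_lt_top ENNReal.ofReal_lt_top hBfin)))
        (measure_mono hAball)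
    have hker : ∀ x ∈ A k, ker μ s x y ≤ (Bt * ENNReal.ofReal (t ^ s))⁻¹ := by
      intro x hx
      rcases hx with ⟨h1, _⟩
      rw [ker, one_div]
      apply ENNReal.inv_le_inv.2
      apply mul_le_mul'
      · apply measure_mono
        refine subset_trans ?_ Set.subset_union_right
        apply ball_subset_ball
        rw [dist_comm]; exact h1
      · exact ENNReal.ofReal_le_ofReal (Real.rpow_le_rpow ht.le h1 hs.le)
    calc ∫⁻ x in A k, ker μ s x y ∂μ ≤ (Bt * ENNReal.ofReal (t ^ s))⁻¹ * μ (A k) :=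
          setLIntegral_le_const_mul μ _ _ _ hker hAfin
      _ ≤ (Bt * ENNReal.ofReal (t ^ s))⁻¹ * (ENNReal.ofReal Cμ * Bt) := by
          apply mul_le_mul_right
          exact le_trans (measure_mono hAball) hBdoub
      _ = ENNReal.ofReal Cμ * (ENNReal.ofReal (t ^ s))⁻¹ * (Bt⁻¹ * Bt) := by
          rw [ENNReal.mul_inv (Or.inl hB0.ne') (Or.inl hBfin.ne)]
          ring
      _ = ENNReal.ofReal Cμ * (ENNReal.ofReal (t ^ s))⁻¹ := by
          rw [ENNReal.inv_mul_cancel hB0.ne' hBfin.ne, mul_one]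
  refine le_trans (ENNReal.tsum_le_tsum hterm) ?_
  -- geometric series
  have hsplit : ∀ k : ℕ, (ENNReal.ofReal ((2 ^ k * δ) ^ s))⁻¹ =
      (ENNReal.ofReal ((2:ℝ) ^ (-s))) ^ k * (ENNReal.ofReal (δ ^ s))⁻¹ := by
    intro k
    have h2k : (0:ℝ) < 2 ^ k := by positivity
    have hδs : (0:ℝ) < δ ^ s := Real.rpow_pos_of_pos hδ s
    have h2ks : (0:ℝ) < ((2:ℝ) ^ k) ^ s := Real.rpow_pos_of_pos h2k s
    rw [Real.mul_rpow h2k.le hδ.le, ENNReal.ofReal_mul h2ks.le,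
      ENNReal.mul_inv (Or.inl (by positivity)) (Or.inl ENNReal.ofReal_ne_top)]
    congr 1
    rw [← ENNReal.ofReal_inv_of_pos h2ks]
    have : (((2:ℝ) ^ k) ^ s)⁻¹ = ((2:ℝ) ^ (-s)) ^ k := by
      rw [← Real.rpow_natCast (2:ℝ) k, ← Real.rpow_mul (by norm_num),
        ← Real.rpow_neg (by norm_num), ← Real.rpow_natCast ((2:ℝ) ^ (-s)) k,
        ← Real.rpow_mul (by norm_num)]
      ring_nf
    rw [this, ENNReal.ofReal_pow (Real.rpow_nonneg (by norm_num) _)]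
  calc ∑' k : ℕ, ENNReal.ofReal Cμ * (ENNReal.ofReal ((2 ^ k * δ) ^ s))⁻¹
      = ENNReal.ofReal Cμ * ∑' k : ℕ, (ENNReal.ofReal ((2 ^ k * δ) ^ s))⁻¹ :=
        ENNReal.tsum_mul_left
    _ = ENNReal.ofReal Cμ *
        ((∑' k : ℕ, (ENNReal.ofReal ((2:ℝ) ^ (-s))) ^ k) * (ENNReal.ofReal (δ ^ s))⁻¹) := by
        rw [tsum_congr hsplit, ENNReal.tsum_mul_right]
    _ ≤ _ := le_of_eq (by rw [ENNReal.tsum_geometric, ← mul_assoc])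

/-- Step C: the layered bound for the perimeter of a fixed ball. -/
lemma sPerimeter_ball_le (μ : Measure X) (Cμ : ℝ)
    (hdoub : ∀ (x : X) (r : ℝ), 0 < r →
      0 < μ (ball x r) ∧ μ (ball x r) < ⊤ ∧
        μ (ball x (2 * r)) ≤ ENNReal.ofReal Cμ * μ (ball x r))
    (s : ℝ) (hs : 0 < s) (z : X) (r : ℝ) (hr : 0 < r) :
    sPerimeter μ s (ball z r) ≤
      (ENNReal.ofReal Cμ * (1 - ENNReal.ofReal ((2:ℝ) ^ (-s)))⁻¹)
          * (ENNReal.ofReal ((r * (2⁻¹:ℝ) ^ (1:ℕ)) ^ s))⁻¹ * μ (ball z r)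
        + ∑' j : ℕ, (ENNReal.ofReal Cμ * (1 - ENNReal.ofReal ((2:ℝ) ^ (-s)))⁻¹)
            * (ENNReal.ofReal ((r * (2⁻¹:ℝ) ^ (j + 2)) ^ s))⁻¹
            * (μ (ball z r) - μ (ball z (r * (1 - (2⁻¹:ℝ) ^ (j + 1))))) := by
  set Kc := ENNReal.ofReal Cμ * (1 - ENNReal.ofReal ((2:ℝ) ^ (-s)))⁻¹ with hKc
  set b : ℕ → ℝ≥0∞ := fun j => Kc * (ENNReal.ofReal ((r * (2⁻¹:ℝ) ^ (j + 1)) ^ s))⁻¹ with hbdef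
  set W : ℕ → Set X := fun j => ball z (r * (1 - (2⁻¹:ℝ) ^ j)) with hWdef
  have hhalf0 : (0:ℝ) ≤ 2⁻¹ := by norm_num
  have hhalf1 : (2⁻¹:ℝ) ≤ 1 := by norm_num
  have hb : Monotone b := by
    intro i j hij
    apply mul_le_mul_right
    apply ENNReal.inv_le_inv.2
    apply ENNReal.ofReal_le_ofReal
    apply Real.rpow_le_rpow (by positivity) ?_ hs.le
    exact mul_le_mul_of_nonneg_left
      (pow_le_pow_of_le_one hhalf0 hhalf1 (Nat.add_le_add_right hij 1)) hr.le
  have hWB : ∀ j, W j ⊆ ball z r := by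
    intro j
    apply ball_subset_ball
    nlinarith [pow_nonneg hhalf0 j]
  have hWmono : Monotone W := by
    intro i j hij
    apply ball_subset_ball
    nlinarith [pow_le_pow_of_le_one hhalf0 hhalf1 hij]
  have hcover : ball z r ⊆ ⋃ j, W j := by
    intro y hy
    rw [mem_ball] at hy
    obtain ⟨j, hj⟩ := exists_pow_lt_of_lt_one
      (show (0:ℝ) < (r - dist y z) / r from div_pos (by linarith) hr)
      (show (2⁻¹:ℝ) < 1 by norm_num)
    refine Set.mem_iUnion.2 ⟨j, ?_⟩
    rw [hWdef, mem_ball]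
    rw [lt_div_iff₀ hr] at hj
    nlinarith
  have hFb : ∀ j, ∀ y ∈ W (j + 1),
      (∫⁻ x in (ball z r)ᶜ, ker μ s x y ∂μ) ≤ b j := by
    intro j y hy
    rw [hWdef, mem_ball] at hy
    set δ : ℝ := r * (2⁻¹:ℝ) ^ (j + 1) with hδdef
    have hδpos : 0 < δ := by positivity
    have hsub : (ball z r)ᶜ ⊆ {x | δ ≤ dist x y} := by
      intro x hx
      rw [Set.mem_compl_iff, mem_ball, not_lt] at hx
      have htri : dist x z ≤ dist x y + dist y z := dist_triangle x y z
      simp only [Set.mem_setOf_eq]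
      nlinarith
    calc (∫⁻ x in (ball z r)ᶜ, ker μ s x y ∂μ)
        ≤ ∫⁻ x in {x | δ ≤ dist x y}, ker μ s x y ∂μ := lintegral_mono_set hsub
      _ ≤ Kc * (ENNReal.ofReal (δ ^ s))⁻¹ := by
          rw [hKc, mul_assoc]
          exact (inner_bound μ Cμ hdoub s hs y δ hδpos).trans (le_of_eq (by rw [mul_assoc]))
      _ = b j := rfl
  have hfin : μ (ball z r) ≠ ⊤ := (hdoub z r hr).2.1.ne
  have key := lintegral_le_layered μ (ball z r) W
    (fun y => ∫⁻ x in (ball z r)ᶜ, ker μ s x y ∂μ) b hb hWB hcover hFb hWmono hfin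
  refine le_trans (le_of_eq (by rw [sPerimeter])) (key.trans ?_)
  apply add_le_add
  · exact le_rfl
  · apply ENNReal.tsum_le_tsum
    intro j
    apply mul_le_mul'
    · exact tsub_le_self.trans (le_of_eq (by rw [hbdef]))
    · exact le_rfl

lemma interval_bound (μ : Measure X) (Cμ : ℝ)
    (hdoub : ∀ (x : X) (r : ℝ), 0 < r →
      0 < μ (ball x r) ∧ μ (ball x r) < ⊤ ∧
        μ (ball x (2 * r)) ≤ ENNReal.ofReal Cμ * μ (ball x r))
    (s : ℝ) (hs : 0 < s) (hs1 : s < 1) (z : X) (R : ℝ) (hR : 0 < R) :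
    ∃ Φ : ℝ → ℝ≥0∞, Measurable Φ ∧
      (∀ r ∈ Set.Ioc (R / 2) R, sPerimeter μ s (ball z r) ≤ Φ r) ∧
      ∫⁻ r in Set.Ioc (R / 2) R, Φ r ∂volume ≠ ⊤ := by
  have h2 : (0:ℝ) < 2 := two_pos
  set Kc := ENNReal.ofReal Cμ * (1 - ENNReal.ofReal ((2:ℝ) ^ (-s)))⁻¹ with hKc
  have hq1 : ENNReal.ofReal ((2:ℝ) ^ (-s)) < 1 := by
    rw [show (1:ℝ≥0∞) = ENNReal.ofReal 1 by simp]
    exact (ENNReal.ofReal_lt_ofReal_iff one_pos).2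
      (Real.rpow_lt_one_of_one_lt_of_neg one_lt_two (by linarith))
  have hKcfin : Kc ≠ ⊤ := by
    apply ENNReal.mul_ne_top ENNReal.ofReal_ne_top
    rw [Ne, ENNReal.inv_eq_top]
    exact fun h => absurd h (tsub_eq_zero_iff_le.not.2 (not_le.2 hq1))
  set G : ℝ → ℝ≥0∞ := fun t => μ (ball z t) with hG
  have hGmono : Monotone G := fun u v huv => measure_mono (ball_subset_ball huv)
  have hGmeas : Measurable G := hGmono.measurable
  have hGRfin : G R ≠ ⊤ := (hdoub z R hR).2.1.ne
  set β : ℕ → ℝ≥0∞ := fun j => Kc * (ENNReal.ofReal ((R * (2⁻¹:ℝ) ^ (j + 2)) ^ s))⁻¹ with hβ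
  have hβfin : ∀ j, β j ≠ ⊤ := by
    intro j
    apply ENNReal.mul_ne_top hKcfin
    rw [Ne, ENNReal.inv_eq_top]
    exact (ENNReal.ofReal_pos.2 (Real.rpow_pos_of_pos (by positivity) s)).ne'
  have hsummeas : ∀ j : ℕ, Measurable fun r : ℝ =>
      β (j + 1) * (G r - G (r - R * (2⁻¹:ℝ) ^ (j + 1))) := by
    intro j
    exact (hGmeas.sub (hGmeas.comp (measurable_id.sub measurable_const))).const_mul _
  refine ⟨fun r => β 0 * G r
      + ∑' j : ℕ, β (j + 1) * (G r - G (r - R * (2⁻¹:ℝ) ^ (j + 1))), ?_, ?_, ?_⟩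
  · exact (hGmeas.const_mul _).add (Measurable.ennreal_tsum hsummeas)
  · rintro r ⟨hr1, hr2⟩
    have hrpos : 0 < r := lt_trans (by positivity) hr1
    refine (sPerimeter_ball_le μ Cμ hdoub s hs z r hrpos).trans ?_
    apply add_le_add
    · apply mul_le_mul' ?_ le_rfl
      apply mul_le_mul_right
      apply ENNReal.inv_le_inv.2
      apply ENNReal.ofReal_le_ofReal
      apply Real.rpow_le_rpow (by positivity) ?_ hs.le
      have : (2⁻¹:ℝ) ^ (2:ℕ) = 2⁻¹ * 2⁻¹ := by norm_num
      nlinarith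
    · apply ENNReal.tsum_le_tsum
      intro j
      apply mul_le_mul'
      · apply mul_le_mul_right
        apply ENNReal.inv_le_inv.2
        apply ENNReal.ofReal_le_ofReal
        apply Real.rpow_le_rpow (by positivity) ?_ hs.le
        have e : (2⁻¹:ℝ) ^ (j + 3) = (2⁻¹:ℝ) ^ (j + 2) * 2⁻¹ := by ring
        rw [e]
        nlinarith [pow_nonneg (show (0:ℝ) ≤ 2⁻¹ by norm_num) (j + 2)]
      · apply tsub_le_tsub le_rfl
        apply hGmono
        nlinarith [pow_nonneg (show (0:ℝ) ≤ 2⁻¹ by norm_num) (j + 1)]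
  · -- finiteness of the integral
    have hvol : volume (Set.Ioc (R / 2) R) ≠ ⊤ := by
      rw [Real.volume_Ioc]; exact ENNReal.ofReal_ne_top
    rw [lintegral_add_left (hGmeas.const_mul _)]
    apply ENNReal.add_ne_top.2
    constructor
    · rw [lintegral_const_mul _ hGmeas]
      apply ENNReal.mul_ne_top (hβfin 0)
      refine ne_top_of_le_ne_top (ENNReal.mul_ne_top hGRfin hvol) ?_
      exact setLIntegral_le_const_mul volume _ G (G R) (fun t ht => hGmono ht.2) hvol
    · rw [lintegral_tsum (fun j => (hsummeas j).aemeasurable)]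
      have hbound : ∀ j : ℕ,
          (∫⁻ r in Set.Ioc (R / 2) R,
            β (j + 1) * (G r - G (r - R * (2⁻¹:ℝ) ^ (j + 1))) ∂volume)
          ≤ (Kc * G R * ENNReal.ofReal ((R * (2⁻¹:ℝ) ^ (3:ℕ)) ^ (-s) * (R * 2⁻¹)))
              * (ENNReal.ofReal ((2:ℝ) ^ (s - 1))) ^ j := by
        intro j
        have hgj : Measurable fun r : ℝ => G r - G (r - R * (2⁻¹:ℝ) ^ (j + 1)) :=
          hGmeas.sub (hGmeas.comp (measurable_id.sub measurable_const))
        rw [lintegral_const_mul _ hgj]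
        have hT := lintegral_tsub_translate G hGmono (R / 2) R (by linarith)
          (R * (2⁻¹:ℝ) ^ (j + 1)) (by positivity) hGRfin
        refine (mul_le_mul_right hT _).trans ?_
        -- now the algebra
        have hpos3 : (0:ℝ) < (R * (2⁻¹:ℝ) ^ (j + 3)) ^ s :=
          Real.rpow_pos_of_pos (by positivity) s
        have hEq : β (j + 1) * (G R * ENNReal.ofReal (R * (2⁻¹:ℝ) ^ (j + 1)))
            = (Kc * G R * ENNReal.ofReal ((R * (2⁻¹:ℝ) ^ (3:ℕ)) ^ (-s) * (R * 2⁻¹)))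
              * (ENNReal.ofReal ((2:ℝ) ^ (s - 1))) ^ j := by
          simp only [hβ]
          have e2 : (ENNReal.ofReal ((R * (2⁻¹:ℝ) ^ (j + 1 + 2)) ^ s))⁻¹
              = ENNReal.ofReal ((R * (2⁻¹:ℝ) ^ (j + 3)) ^ (-s)) := by
            rw [show j + 1 + 2 = j + 3 from rfl,
              Real.rpow_neg (by positivity : (0:ℝ) ≤ R * (2⁻¹:ℝ) ^ (j + 3)),
              ENNReal.ofReal_inv_of_pos hpos3]
          rw [e2]
          rw [show Kc * ENNReal.ofReal ((R * (2⁻¹:ℝ) ^ (j + 3)) ^ (-s))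
              * (G R * ENNReal.ofReal (R * (2⁻¹:ℝ) ^ (j + 1)))
            = Kc * G R * (ENNReal.ofReal ((R * (2⁻¹:ℝ) ^ (j + 3)) ^ (-s))
              * ENNReal.ofReal (R * (2⁻¹:ℝ) ^ (j + 1))) by ring]
          rw [← ENNReal.ofReal_mul (by positivity), real_geom_id R s hR j,
            ENNReal.ofReal_mul (by positivity),
            ENNReal.ofReal_pow (by positivity : (0:ℝ) ≤ (2:ℝ) ^ (s - 1))]
          ring
        exact le_of_eq hEq
      refine ne_top_of_le_ne_top ?_ (ENNReal.tsum_le_tsum hbound)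
      rw [ENNReal.tsum_mul_left, ENNReal.tsum_geometric]
      apply ENNReal.mul_ne_top
        (ENNReal.mul_ne_top (ENNReal.mul_ne_top hKcfin hGRfin) ENNReal.ofReal_ne_top)
      rw [Ne, ENNReal.inv_eq_top]
      refine (tsub_eq_zero_iff_le.not.2 (not_le.2 ?_))
      rw [show (1:ℝ≥0∞) = ENNReal.ofReal 1 by simp]
      exact (ENNReal.ofReal_lt_ofReal_iff one_pos).2
        (Real.rpow_lt_one_of_one_lt_of_neg one_lt_two (by linarith))

end Metric

/-- In a complete connected doubling metric measure space, for every `z` and almost every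
`r > 0`, the ball `B(z,r)` has finite nonlocal `s`-perimeter. -/
theorem stmt12 {X : Type*} [MetricSpace X] [MeasurableSpace X]
    [CompleteSpace X] [ConnectedSpace X]
    (μ : Measure X) (Cμ : ℝ) (hC : 1 ≤ Cμ)
    (hdoub : ∀ (x : X) (r : ℝ), 0 < r →
      0 < μ (ball x r) ∧ μ (ball x r) < ⊤ ∧
        μ (ball x (2 * r)) ≤ ENNReal.ofReal Cμ * μ (ball x r))
    (s : ℝ) (hs : 0 < s) (hs1 : s < 1) :
    ∀ z : X, ∀ᵐ r ∂(volume.restrict (Set.Ioi (0 : ℝ))),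
      sPerimeter μ s (ball z r) < ⊤ := by
  intro z
  have main := fun n : ℤ =>
    interval_bound μ Cμ hdoub s hs hs1 z ((2:ℝ) ^ (n + 1)) (by positivity)
  choose Φ hΦmeas hΦle hΦfin using main
  have hhalf : ∀ n : ℤ, (2:ℝ) ^ (n + 1) / 2 = (2:ℝ) ^ n := by
    intro n; rw [zpow_add_one₀ (two_ne_zero)]; ring
  set N : Set ℝ :=
    ⋃ n : ℤ, (Set.Ioc ((2:ℝ) ^ n) ((2:ℝ) ^ (n + 1)) ∩ {r | Φ n r = ⊤}) with hN
  have hNnull : volume N = 0 := by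
    apply measure_iUnion_null
    intro n
    have h1 : ∀ᵐ r ∂(volume.restrict
        (Set.Ioc ((2:ℝ) ^ (n + 1) / 2) ((2:ℝ) ^ (n + 1)))), Φ n r < ⊤ :=
      ae_lt_top' (hΦmeas n).aemeasurable (hΦfin n)
    rw [hhalf n] at h1
    have h2 := ae_iff.1 h1
    rw [Measure.restrict_apply' measurableSet_Ioc] at h2
    refine measure_mono_null ?_ h2
    intro r hr
    exact ⟨by simp [hr.2], hr.1⟩
  have hae1 : ∀ᵐ r ∂(volume.restrict (Set.Ioi (0:ℝ))), r ∉ N :=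
    ae_restrict_of_ae (measure_eq_zero_iff_ae_notMem.1 hNnull)
  have hae2 : ∀ᵐ r ∂(volume.restrict (Set.Ioi (0:ℝ))), r ∈ Set.Ioi (0:ℝ) :=
    ae_restrict_mem measurableSet_Ioi
  filter_upwards [hae1, hae2] with r hrN hr
  obtain ⟨n, hn⟩ := exists_mem_Ioc_zpow (x := r) hr one_lt_two
  have hmem : r ∈ Set.Ioc ((2:ℝ) ^ (n + 1) / 2) ((2:ℝ) ^ (n + 1)) := by
    rw [hhalf]; exact hn
  have hne : Φ n r ≠ ⊤ := fun h => hrN (Set.mem_iUnion.2 ⟨n, hn, h⟩)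
  exact lt_of_le_of_lt (hΦle n r hmem) (lt_top_iff_ne_top.2 hne)
end

section
/- Let (X,d,μ) be a complete connected doubling metric measure space and 0 < s < 1. For a ball B(x,R) with R bounded, and for a 1-Lipschitz bounded function f with f constant outside B(x,R), the nonlocal seminorm ‖f‖_{Ẇ^{s,1}(X)} := ∬_{X×X} |f(x)−f(y)|/(μ(B_{x,y}) d(x,y)^s) dμ(x) dμ(y) is finite; more precisely ‖f‖_{Ẇ^{s,1}(X)} ≤ (C/(s(1−s))) μ(B(x,R)) max(R^{1−s}, ‖f‖_∞ R^{−s}) for a constant C depending only on the doubling constant. -/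
open MeasureTheory Metric
open scoped ENNReal

/-- The `Ẇ^{s,1}(X)` seminorm. -/
noncomputable def wSeminorm {X : Type*} [MetricSpace X] [MeasurableSpace X]
    (μ : Measure X) (s : ℝ) (f : X → ℝ) : ℝ≥0∞ :=
  ∫⁻ y, ∫⁻ x, ENNReal.ofReal |f x - f y| * ker μ s x y ∂μ ∂μ

lemma setLIntegral_le_of_forall_le {α : Type*} [MeasurableSpace α] (μ : Measure α)
    (s : Set α) (f : α → ℝ≥0∞) (c : ℝ≥0∞) (h : ∀ x ∈ s, f x ≤ c) :
    ∫⁻ x in s, f x ∂μ ≤ c * μ s := by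
  simp only [lintegral]
  refine iSup_le fun g => iSup_le fun hg => ?_
  rw [SimpleFunc.lintegral]
  calc ∑ a ∈ g.range, a * (μ.restrict s) (g ⁻¹' {a})
      ≤ ∑ a ∈ g.range, c * (μ.restrict s) (g ⁻¹' {a}) := by
        refine Finset.sum_le_sum fun a _ => ?_
        rcases eq_or_ne ((μ.restrict s) (g ⁻¹' {a})) 0 with h0 | h0
        · simp [h0]
        · refine mul_le_mul_left ?_ _
          rw [Measure.restrict_apply (g.measurableSet_preimage _)] at h0
          have hne : (g ⁻¹' {a} ∩ s).Nonempty := by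
            rw [Set.nonempty_iff_ne_empty]
            intro he
            exact h0 (by rw [he]; exact measure_empty)
          obtain ⟨x, hx1, hx2⟩ := hne
          have hxa : g x = a := hx1
          calc a = g x := hxa.symm
            _ ≤ f x := hg x
            _ ≤ c := h x hx2
    _ = c * ∑ a ∈ g.range, (μ.restrict s) (g ⁻¹' {a}) := (Finset.mul_sum _ _ _).symm
    _ ≤ c * μ s := by
        refine mul_le_mul_right ?_ _
        rw [SimpleFunc.sum_range_measure_preimage_singleton]
        rw [Measure.restrict_apply_univ]

lemma geom_aux {t : ℝ} (h0 : 0 < t) (h1 : t ≤ 1) : t / 4 ≤ 1 - (2:ℝ) ^ (-t) := by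
  have hl2 : (0.6931471803 : ℝ) < Real.log 2 := Real.log_two_gt_d9
  have hl2' : Real.log 2 < 1 := by
    have := Real.log_two_lt_d9; linarith
  have h2 : (2:ℝ) ^ (-t) = Real.exp (-(t * Real.log 2)) := by
    rw [Real.rpow_def_of_pos (by norm_num : (0:ℝ) < 2)]
    ring_nf
  set u := t * Real.log 2 with hu
  have hu0 : 0 < u := mul_pos h0 (by linarith)
  have hu1 : u ≤ 1 := by
    calc u ≤ 1 * 1 := mul_le_mul h1 hl2'.le (by linarith) zero_le_one
      _ = 1 := one_mul 1
  have hexp : Real.exp (-u) ≤ (1 + u)⁻¹ := by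
    rw [Real.exp_neg]
    refine inv_anti₀ (by linarith) ?_
    have := Real.add_one_le_exp u
    linarith
  have key : u / 2 ≤ 1 - (1 + u)⁻¹ := by
    have h1u : (0:ℝ) < 1 + u := by linarith
    rw [inv_eq_one_div, le_sub_iff_add_le, div_add_div _ _ two_ne_zero h1u.ne',
      div_le_one (by positivity)]
    nlinarith
  have ht4 : t / 4 ≤ u / 2 := by
    rw [div_le_div_iff₀ (by norm_num) (by norm_num)]
    nlinarith
  rw [h2]
  linarith

/-- Geometric series bound `∑ q^n ≤ 4/t` for `q = 2^{-t}`. -/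
lemma geom_sum_le {t : ℝ} (h0 : 0 < t) (h1 : t ≤ 1) :
    ∑' n : ℕ, (ENNReal.ofReal ((2:ℝ) ^ (-t))) ^ n ≤ ENNReal.ofReal (4 / t) := by
  rw [ENNReal.tsum_geometric]
  have hq0 : (0:ℝ) ≤ (2:ℝ) ^ (-t) := (Real.rpow_pos_of_pos (by norm_num) _).le
  have h1s : (1:ℝ≥0∞) - ENNReal.ofReal ((2:ℝ) ^ (-t))
      = ENNReal.ofReal (1 - (2:ℝ) ^ (-t)) := by
    rw [ENNReal.ofReal_sub _ hq0, ENNReal.ofReal_one]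
  rw [h1s, ← ENNReal.ofReal_inv_of_pos (by nlinarith [geom_aux h0 h1])]
  apply ENNReal.ofReal_le_ofReal
  rw [inv_le_iff_one_le_mul₀ (by nlinarith [geom_aux h0 h1]), div_mul_eq_mul_div,
    le_div_iff₀ h0]
  nlinarith [geom_aux h0 h1]

/-- Existence of a dyadic annulus containing a point at distance `d`. -/
lemma exists_dyadic {d ρ : ℝ} (hd : 0 < d) (hρ : 0 < ρ) :
    ∃ j : ℤ, (2:ℝ) ^ j * ρ ≤ d ∧ d < (2:ℝ) ^ (j + 1) * ρ := by
  refine ⟨⌊Real.logb 2 (d / ρ)⌋, ?_, ?_⟩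
  · have h1 : (2:ℝ) ^ ((⌊Real.logb 2 (d / ρ)⌋ : ℝ)) ≤ (2:ℝ) ^ (Real.logb 2 (d / ρ)) :=
      Real.rpow_le_rpow_of_exponent_le (by norm_num) (Int.floor_le _)
    rw [Real.rpow_intCast] at h1
    rw [Real.rpow_logb (by norm_num) (by norm_num) (div_pos hd hρ)] at h1
    calc (2:ℝ) ^ (⌊Real.logb 2 (d / ρ)⌋) * ρ ≤ (d / ρ) * ρ := by
          exact mul_le_mul_of_nonneg_right h1 hρ.le
      _ = d := div_mul_cancel₀ _ hρ.ne'
  · have h1 : (2:ℝ) ^ (Real.logb 2 (d / ρ)) < (2:ℝ) ^ ((⌊Real.logb 2 (d / ρ)⌋ + 1 : ℤ) : ℝ) := by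
      apply Real.rpow_lt_rpow_of_exponent_lt (by norm_num)
      push_cast
      exact Int.lt_floor_add_one _
    rw [Real.rpow_intCast] at h1
    rw [Real.rpow_logb (by norm_num) (by norm_num) (div_pos hd hρ)] at h1
    calc d = (d / ρ) * ρ := (div_mul_cancel₀ _ hρ.ne').symm
      _ < (2:ℝ) ^ (⌊Real.logb 2 (d / ρ)⌋ + 1) * ρ := by
          exact mul_lt_mul_of_pos_right h1 hρ

section
variable {X : Type*} [MetricSpace X] [MeasurableSpace X]
  (μ : Measure X) {Cμ : ℝ}

/-- Pointwise kernel bound on an annulus-like condition. -/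
lemma ker_le {s : ℝ} (hs : 0 < s) (y x : X) {r : ℝ} (hr : 0 < r)
    (hrd : r ≤ dist y x) :
    ker μ s x y ≤ (μ (ball y r) * ENNReal.ofReal (r ^ s))⁻¹ := by
  rw [ker, one_div]
  apply ENNReal.inv_le_inv.2
  apply mul_le_mul'
  · exact measure_mono ((ball_subset_ball hrd).trans Set.subset_union_right)
  · apply ENNReal.ofReal_le_ofReal
    exact Real.rpow_le_rpow hr.le (by rw [dist_comm]; exact hrd) hs.le

/-- The core annulus estimate. -/
lemma annulus_est (hC : 1 ≤ Cμ)
    (hdoub : ∀ (x : X) (r : ℝ), 0 < r →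
      0 < μ (ball x r) ∧ μ (ball x r) < ⊤ ∧
        μ (ball x (2 * r)) ≤ ENNReal.ofReal Cμ * μ (ball x r))
    {s : ℝ} (hs : 0 < s) {f : X → ℝ} {b : ℝ} (hb : 0 ≤ b) (y : X)
    (hfb : ∀ x, |f x - f y| ≤ min (dist x y) b) {r : ℝ} (hr : 0 < r) :
    ∫⁻ x in {x | r ≤ dist y x ∧ dist y x < 2 * r},
        ENNReal.ofReal |f x - f y| * ker μ s x y ∂μ
      ≤ ENNReal.ofReal (Cμ * (min (2 * r) b * (r ^ s)⁻¹)) := by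
  obtain ⟨hB0, hBt, hBd⟩ := hdoub y r hr
  have hrs : 0 < r ^ s := Real.rpow_pos_of_pos hr s
  set c : ℝ≥0∞ :=
    ENNReal.ofReal (min (2 * r) b) * (μ (ball y r) * ENNReal.ofReal (r ^ s))⁻¹ with hc
  have step1 :
      ∫⁻ x in {x | r ≤ dist y x ∧ dist y x < 2 * r},
          ENNReal.ofReal |f x - f y| * ker μ s x y ∂μ
        ≤ c * μ {x | r ≤ dist y x ∧ dist y x < 2 * r} := by
    refine setLIntegral_le_of_forall_le μ _ _ c fun x hx => ?_
    refine mul_le_mul' ?_ (ker_le μ hs y x hr hx.1)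
    apply ENNReal.ofReal_le_ofReal
    refine (hfb x).trans (min_le_min ?_ le_rfl)
    rw [dist_comm]; exact hx.2.le
  have step2 : μ {x | r ≤ dist y x ∧ dist y x < 2 * r} ≤ μ (ball y (2 * r)) := by
    refine measure_mono fun x hx => ?_
    rw [mem_ball, dist_comm]; exact hx.2
  have key : (μ (ball y r) * ENNReal.ofReal (r ^ s))⁻¹ * μ (ball y (2 * r))
      ≤ ENNReal.ofReal Cμ * (ENNReal.ofReal (r ^ s))⁻¹ := by
    rw [ENNReal.mul_inv (Or.inl hB0.ne') (Or.inl hBt.ne)]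
    calc (μ (ball y r))⁻¹ * (ENNReal.ofReal (r ^ s))⁻¹ * μ (ball y (2 * r))
        = (ENNReal.ofReal (r ^ s))⁻¹ * ((μ (ball y r))⁻¹ * μ (ball y (2 * r))) := by ring
      _ ≤ (ENNReal.ofReal (r ^ s))⁻¹ *
            ((μ (ball y r))⁻¹ * (ENNReal.ofReal Cμ * μ (ball y r))) :=
          mul_le_mul' le_rfl (mul_le_mul' le_rfl hBd)
      _ = ENNReal.ofReal Cμ * ((μ (ball y r))⁻¹ * μ (ball y r)) *
            (ENNReal.ofReal (r ^ s))⁻¹ := by ring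
      _ = ENNReal.ofReal Cμ * (ENNReal.ofReal (r ^ s))⁻¹ := by
          rw [ENNReal.inv_mul_cancel hB0.ne' hBt.ne, mul_one]
  calc ∫⁻ x in {x | r ≤ dist y x ∧ dist y x < 2 * r},
          ENNReal.ofReal |f x - f y| * ker μ s x y ∂μ
      ≤ c * μ {x | r ≤ dist y x ∧ dist y x < 2 * r} := step1
    _ ≤ c * μ (ball y (2 * r)) := mul_le_mul' le_rfl step2
    _ = ENNReal.ofReal (min (2 * r) b) *
          ((μ (ball y r) * ENNReal.ofReal (r ^ s))⁻¹ * μ (ball y (2 * r))) := by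
        rw [hc]; ring
    _ ≤ ENNReal.ofReal (min (2 * r) b) *
          (ENNReal.ofReal Cμ * (ENNReal.ofReal (r ^ s))⁻¹) := mul_le_mul' le_rfl key
    _ = ENNReal.ofReal (Cμ * (min (2 * r) b * (r ^ s)⁻¹)) := by
        rw [← ENNReal.ofReal_inv_of_pos hrs,
          ← ENNReal.ofReal_mul (by linarith : (0:ℝ) ≤ Cμ),
          ← ENNReal.ofReal_mul (le_min (by linarith) hb)]
        ring_nf
end

lemma two_pow_rpow (n : ℕ) (t : ℝ) : ((2:ℝ) ^ n) ^ t = ((2:ℝ) ^ t) ^ n := by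
  rw [← Real.rpow_natCast (2:ℝ) n, ← Real.rpow_mul (by norm_num), mul_comm,
    Real.rpow_mul (by norm_num), Real.rpow_natCast]

section
variable {X : Type*} [MetricSpace X] [MeasurableSpace X] (μ : Measure X) {Cμ : ℝ}

/-- The full-space inner estimate, for any base point `y`. -/
lemma inner_est (hC : 1 ≤ Cμ)
    (hdoub : ∀ (x : X) (r : ℝ), 0 < r →
      0 < μ (ball x r) ∧ μ (ball x r) < ⊤ ∧
        μ (ball x (2 * r)) ≤ ENNReal.ofReal Cμ * μ (ball x r))
    {s : ℝ} (hs : 0 < s) (hs1 : s < 1) {f : X → ℝ} {b : ℝ} (hb : 0 ≤ b) (y : X)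
    (hfb : ∀ x, |f x - f y| ≤ min (dist x y) b) {ρ : ℝ} (hρ : 0 < ρ) :
    ∫⁻ x, ENNReal.ofReal |f x - f y| * ker μ s x y ∂μ
      ≤ ENNReal.ofReal (Cμ * b * (ρ ^ s)⁻¹ * (4 / s) +
          2 * Cμ * ρ ^ (1 - s) * (4 / (1 - s))) := by
  have hC0 : (0:ℝ) ≤ Cμ := by linarith
  set F : X → ℝ≥0∞ := fun x => ENNReal.ofReal |f x - f y| * ker μ s x y with hF
  set Aout : ℕ → Set X :=
    fun n => {x | (2:ℝ) ^ n * ρ ≤ dist y x ∧ dist y x < 2 * ((2:ℝ) ^ n * ρ)} with hAout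
  set Ain : ℕ → Set X :=
    fun n => {x | ρ / 2 ^ (n + 1) ≤ dist y x ∧ dist y x < 2 * (ρ / 2 ^ (n + 1))} with hAin
  have huniv : ({y} ∪ ((⋃ n, Aout n) ∪ ⋃ n, Ain n)) = Set.univ := by
    apply Set.eq_univ_of_forall
    intro x
    rcases eq_or_lt_of_le (dist_nonneg : (0:ℝ) ≤ dist y x) with hd | hd
    · left
      exact Set.mem_singleton_iff.2 (eq_of_dist_eq_zero (by rw [dist_comm, ← hd]))
    · obtain ⟨j, hj1, hj2⟩ := exists_dyadic hd hρ
      rcases le_or_gt 0 j with hj | hj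
      · right; left
        refine Set.mem_iUnion.2 ⟨j.toNat, ?_, ?_⟩
        · have : ((2:ℝ) ^ j.toNat : ℝ) = (2:ℝ) ^ j := by
            rw [← zpow_natCast (2:ℝ) j.toNat, Int.toNat_of_nonneg hj]
          rw [this]; exact hj1
        · have : ((2:ℝ) ^ j.toNat : ℝ) = (2:ℝ) ^ j := by
            rw [← zpow_natCast (2:ℝ) j.toNat, Int.toNat_of_nonneg hj]
          rw [this]
          calc dist y x < (2:ℝ) ^ (j + 1) * ρ := hj2
            _ = 2 * ((2:ℝ) ^ j * ρ) := by
                rw [zpow_add_one₀ (two_ne_zero)]; ring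
      · right; right
        set n : ℕ := (-(j + 1)).toNat with hn
        have hjn : j = -((n:ℤ) + 1) := by
          have : ((n:ℤ)) = -(j+1) := Int.toNat_of_nonneg (by omega)
          omega
        have e1 : (2:ℝ) ^ j * ρ = ρ / 2 ^ (n + 1) := by
          rw [hjn, zpow_neg, ← zpow_natCast (2:ℝ) (n + 1)]
          push_cast
          rw [div_eq_mul_inv]; ring
        have e2 : (2:ℝ) ^ (j + 1) * ρ = 2 * (ρ / 2 ^ (n + 1)) := by
          rw [zpow_add_one₀ two_ne_zero]
          linear_combination 2 * e1
        refine Set.mem_iUnion.2 ⟨n, ?_, ?_⟩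
        · rw [← e1]; exact hj1
        · rw [← e2]; exact hj2
  have h_sing : ∫⁻ x in {y}, F x ∂μ ≤ 0 := by
    have := setLIntegral_le_of_forall_le μ {y} F 0 (fun x hx => by
      rw [Set.mem_singleton_iff] at hx
      subst hx
      simp [hF])
    simpa using this
  -- outer sum
  have hρs : 0 < ρ ^ s := Real.rpow_pos_of_pos hρ s
  have h2s : (0:ℝ) < (2:ℝ) ^ (-s) := Real.rpow_pos_of_pos two_pos _
  have h_out : ∫⁻ x in ⋃ n, Aout n, F x ∂μ
      ≤ ENNReal.ofReal ((Cμ * b * (ρ ^ s)⁻¹) * (4 / s)) := by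
    calc ∫⁻ x in ⋃ n, Aout n, F x ∂μ ≤ ∑' n, ∫⁻ x in Aout n, F x ∂μ :=
        lintegral_iUnion_le _ _
      _ ≤ ∑' n : ℕ, ENNReal.ofReal ((Cμ * b * (ρ ^ s)⁻¹) * ((2:ℝ) ^ (-s)) ^ n) := by
          refine ENNReal.tsum_le_tsum fun n => ?_
          have hr : (0:ℝ) < (2:ℝ) ^ n * ρ := by positivity
          refine le_trans (annulus_est μ hC hdoub hs hb y hfb hr) ?_
          apply ENNReal.ofReal_le_ofReal
          have hpow : (((2:ℝ) ^ n * ρ) ^ s)⁻¹ = ((2:ℝ) ^ (-s)) ^ n * (ρ ^ s)⁻¹ := by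
            rw [Real.mul_rpow (by positivity) hρ.le, two_pow_rpow n s, mul_inv, ← inv_pow,
              ← Real.rpow_neg (by norm_num : (0:ℝ) ≤ 2)]
          rw [hpow]
          have h1 : min (2 * ((2:ℝ) ^ n * ρ)) b ≤ b := min_le_right _ _
          have h2 : (0:ℝ) ≤ ((2:ℝ) ^ (-s)) ^ n * (ρ ^ s)⁻¹ := by positivity
          calc Cμ * (min (2 * ((2:ℝ) ^ n * ρ)) b * (((2:ℝ) ^ (-s)) ^ n * (ρ ^ s)⁻¹))
              ≤ Cμ * (b * (((2:ℝ) ^ (-s)) ^ n * (ρ ^ s)⁻¹)) := by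
                refine mul_le_mul_of_nonneg_left ?_ hC0
                exact mul_le_mul_of_nonneg_right h1 h2
            _ = (Cμ * b * (ρ ^ s)⁻¹) * ((2:ℝ) ^ (-s)) ^ n := by ring
      _ = ENNReal.ofReal (Cμ * b * (ρ ^ s)⁻¹) *
            ∑' n : ℕ, (ENNReal.ofReal ((2:ℝ) ^ (-s))) ^ n := by
          rw [← ENNReal.tsum_mul_left]
          congr 1 with n
          rw [← ENNReal.ofReal_pow h2s.le, ← ENNReal.ofReal_mul (by positivity)]
      _ ≤ ENNReal.ofReal (Cμ * b * (ρ ^ s)⁻¹) * ENNReal.ofReal (4 / s) :=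
          mul_le_mul' le_rfl (geom_sum_le hs hs1.le)
      _ = ENNReal.ofReal ((Cμ * b * (ρ ^ s)⁻¹) * (4 / s)) := by
          rw [← ENNReal.ofReal_mul (by positivity)]
  -- inner sum
  have h1s : 0 < 1 - s := by linarith
  have h2s' : (0:ℝ) < (2:ℝ) ^ (-(1-s)) := Real.rpow_pos_of_pos two_pos _
  have h_in : ∫⁻ x in ⋃ n, Ain n, F x ∂μ
      ≤ ENNReal.ofReal ((2 * Cμ * ρ ^ (1 - s)) * (4 / (1 - s))) := by
    calc ∫⁻ x in ⋃ n, Ain n, F x ∂μ ≤ ∑' n, ∫⁻ x in Ain n, F x ∂μ :=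
        lintegral_iUnion_le _ _
      _ ≤ ∑' n : ℕ, ENNReal.ofReal ((2 * Cμ * ρ ^ (1 - s)) * ((2:ℝ) ^ (-(1-s))) ^ n) := by
          refine ENNReal.tsum_le_tsum fun n => ?_
          have hr : (0:ℝ) < ρ / 2 ^ (n + 1) := by positivity
          refine le_trans (annulus_est μ hC hdoub hs hb y hfb hr) ?_
          apply ENNReal.ofReal_le_ofReal
          have h1 : min (2 * (ρ / 2 ^ (n+1))) b ≤ 2 * (ρ / 2 ^ (n+1)) := min_le_left _ _
          have hre : (ρ / 2 ^ (n+1)) * ((ρ / 2 ^ (n+1)) ^ s)⁻¹ = (ρ / 2 ^ (n+1)) ^ (1 - s) := by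
            rw [Real.rpow_sub hr, Real.rpow_one]
            ring
          have hsplit : (ρ / 2 ^ (n+1)) ^ (1 - s)
              = ρ ^ (1 - s) * ((2:ℝ) ^ (-(1-s))) ^ (n+1) := by
            rw [div_eq_mul_inv, Real.mul_rpow hρ.le (by positivity),
              Real.inv_rpow (by positivity), two_pow_rpow (n+1) (1 - s), ← inv_pow,
              ← Real.rpow_neg (by norm_num : (0:ℝ) ≤ 2)]
          have hfac : ((2:ℝ) ^ (-(1-s))) ^ (n+1) ≤ ((2:ℝ) ^ (-(1-s))) ^ n := by
            rw [pow_succ]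
            have : (2:ℝ) ^ (-(1-s)) ≤ 1 :=
              Real.rpow_le_one_of_one_le_of_nonpos (by norm_num) (by linarith)
            nlinarith [pow_nonneg h2s'.le n]
          have hρ1s : (0:ℝ) ≤ ρ ^ (1 - s) := (Real.rpow_pos_of_pos hρ _).le
          calc Cμ * (min (2 * (ρ / 2 ^ (n+1))) b * ((ρ / 2 ^ (n+1)) ^ s)⁻¹)
              ≤ Cμ * ((2 * (ρ / 2 ^ (n+1))) * ((ρ / 2 ^ (n+1)) ^ s)⁻¹) := by
                refine mul_le_mul_of_nonneg_left ?_ hC0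
                exact mul_le_mul_of_nonneg_right h1 (by positivity)
            _ = 2 * Cμ * ((ρ / 2 ^ (n+1)) * ((ρ / 2 ^ (n+1)) ^ s)⁻¹) := by ring
            _ = 2 * Cμ * (ρ ^ (1 - s) * ((2:ℝ) ^ (-(1-s))) ^ (n+1)) := by
                rw [hre, hsplit]
            _ ≤ 2 * Cμ * (ρ ^ (1 - s) * ((2:ℝ) ^ (-(1-s))) ^ n) := by
                refine mul_le_mul_of_nonneg_left ?_ (by positivity)
                exact mul_le_mul_of_nonneg_left hfac hρ1s
            _ = (2 * Cμ * ρ ^ (1 - s)) * ((2:ℝ) ^ (-(1-s))) ^ n := by ring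
      _ = ENNReal.ofReal (2 * Cμ * ρ ^ (1 - s)) *
            ∑' n : ℕ, (ENNReal.ofReal ((2:ℝ) ^ (-(1-s)))) ^ n := by
          rw [← ENNReal.tsum_mul_left]
          congr 1 with n
          rw [← ENNReal.ofReal_pow h2s'.le, ← ENNReal.ofReal_mul (by positivity)]
      _ ≤ ENNReal.ofReal (2 * Cμ * ρ ^ (1 - s)) * ENNReal.ofReal (4 / (1 - s)) :=
          mul_le_mul' le_rfl (geom_sum_le h1s (by linarith))
      _ = ENNReal.ofReal ((2 * Cμ * ρ ^ (1 - s)) * (4 / (1 - s))) := by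
          rw [← ENNReal.ofReal_mul (by positivity)]
  calc ∫⁻ x, F x ∂μ = ∫⁻ x in Set.univ, F x ∂μ := by rw [Measure.restrict_univ]
    _ = ∫⁻ x in {y} ∪ ((⋃ n, Aout n) ∪ ⋃ n, Ain n), F x ∂μ := by rw [huniv]
    _ ≤ ∫⁻ x in {y}, F x ∂μ +
          ∫⁻ x in (⋃ n, Aout n) ∪ ⋃ n, Ain n, F x ∂μ := lintegral_union_le _ _ _
    _ ≤ ∫⁻ x in {y}, F x ∂μ +
          (∫⁻ x in ⋃ n, Aout n, F x ∂μ + ∫⁻ x in ⋃ n, Ain n, F x ∂μ) :=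
        add_le_add le_rfl (lintegral_union_le _ _ _)
    _ ≤ 0 + (ENNReal.ofReal ((Cμ * b * (ρ ^ s)⁻¹) * (4 / s)) +
          ENNReal.ofReal ((2 * Cμ * ρ ^ (1 - s)) * (4 / (1 - s)))) :=
        add_le_add h_sing (add_le_add h_out h_in)
    _ = ENNReal.ofReal (Cμ * b * (ρ ^ s)⁻¹ * (4 / s) +
          2 * Cμ * ρ ^ (1 - s) * (4 / (1 - s))) := by
        rw [zero_add, ← ENNReal.ofReal_add (by positivity) (by positivity)]
end

lemma final_real {Cμ s M R m : ℝ} (hC : 1 ≤ Cμ) (hs : 0 < s) (hs1 : s < 1) (hR : 0 < R)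
    (hM : 0 ≤ M) (hm1 : R ^ (1-s) ≤ m) (hm2 : M * R ^ (-s) ≤ m) :
    (Cμ * (2*M) * (R^s)⁻¹ * (4/s) + 2 * Cμ * R^(1-s) * (4/(1-s))) * Cμ
      + (2*M) * Cμ^3 * (R^s)⁻¹ * (4/s) ≤ 100 * Cμ^3 / (s*(1-s)) * m := by
  have h1s : 0 < 1 - s := by linarith
  have hss : 0 < s * (1-s) := by positivity
  have hp : 0 < R ^ (1-s) := Real.rpow_pos_of_pos hR _
  have hq : 0 ≤ M * R ^ (-s) := by positivity
  have hm : 0 < m := lt_of_lt_of_le hp hm1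
  have hC0 : 0 < Cμ := by linarith
  rw [show (R^s)⁻¹ = R^(-s) from (Real.rpow_neg hR.le s).symm,
    div_mul_eq_mul_div, le_div_iff₀ hss]
  have e1 : ((Cμ * (2*M) * R^(-s) * (4/s) + 2 * Cμ * R^(1-s) * (4/(1-s))) * Cμ
      + (2*M) * Cμ^3 * R^(-s) * (4/s)) * (s*(1-s))
      = 8 * Cμ^2 * (M * R^(-s)) * (1-s) + 8 * Cμ^2 * (R^(1-s)) * s
        + 8 * Cμ^3 * (M * R^(-s)) * (1-s) := by
    field_simp
    ring
  rw [e1]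
  have hC2 : (0:ℝ) ≤ Cμ^2 := by positivity
  have hC3 : (0:ℝ) ≤ Cμ^3 := by positivity
  have hc23 : Cμ^2 ≤ Cμ^3 := by
    calc Cμ^2 = Cμ^2 * 1 := (mul_one _).symm
      _ ≤ Cμ^2 * Cμ := by
          exact mul_le_mul_of_nonneg_left hC hC2
      _ = Cμ^3 := by ring
  have h1 : Cμ^2 * (M * R^(-s)) ≤ Cμ^3 * m := mul_le_mul hc23 hm2 hq hC3
  have h2 : Cμ^2 * (R^(1-s)) ≤ Cμ^3 * m := mul_le_mul hc23 hm1 hp.le hC3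
  have h3 : Cμ^3 * (M * R^(-s)) ≤ Cμ^3 * m := mul_le_mul_of_nonneg_left hm2 hC3
  have w1 : (0:ℝ) ≤ Cμ^2 * (M * R^(-s)) * s := by positivity
  have w2 : (0:ℝ) ≤ Cμ^2 * (R^(1-s)) * (1-s) := by positivity
  have w3 : (0:ℝ) ≤ Cμ^3 * (M * R^(-s)) * s := by positivity
  have w4 : (0:ℝ) ≤ Cμ^3 * m := by positivity
  nlinarith [w1, w2, w3, w4, h1, h2, h3]

/-- For a bounded `1`-Lipschitz function `f` which is constant outside a ball `B(z,R)`,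
the nonlocal seminorm is finite, with bound
`‖f‖_{Ẇ^{s,1}(X)} ≤ (C/(s(1−s))) μ(B(z,R)) max(R^{1−s}, ‖f‖_∞ R^{−s})`,
with `C` depending only on the doubling constant. -/
theorem stmt13 {X : Type*} [MetricSpace X] [MeasurableSpace X]
    [CompleteSpace X] [ConnectedSpace X]
    (μ : Measure X) (Cμ : ℝ) (hC : 1 ≤ Cμ)
    (hdoub : ∀ (x : X) (r : ℝ), 0 < r →
      0 < μ (ball x r) ∧ μ (ball x r) < ⊤ ∧
        μ (ball x (2 * r)) ≤ ENNReal.ofReal Cμ * μ (ball x r)) :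
    ∃ C > (0 : ℝ), ∀ (s : ℝ), 0 < s → s < 1 →
      ∀ (z : X) (R : ℝ) (f : X → ℝ) (M c : ℝ), 0 < R →
        LipschitzWith 1 f → (∀ x, |f x| ≤ M) → (∀ x ∉ ball z R, f x = c) →
        wSeminorm μ s f
          ≤ ENNReal.ofReal ((C / (s * (1 - s))) * (μ (ball z R)).toReal *
              max (R ^ (1 - s)) (M * R ^ (-s))) := by
  have hC0 : (0:ℝ) < Cμ := lt_of_lt_of_le one_pos hC
  refine ⟨100 * Cμ ^ 3, by positivity, fun s hs hs1 z R f M c hR hlip hM hconst => ?_⟩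
  obtain ⟨hB0, hBt, hBd⟩ := hdoub z R hR
  have h1s : (0:ℝ) < 1 - s := by linarith
  have hM0 : (0:ℝ) ≤ M := le_trans (abs_nonneg _) (hM (Classical.arbitrary X))
  have hfb : ∀ y x, |f x - f y| ≤ min (dist x y) (2 * M) := by
    intro y x
    refine le_min ?_ ?_
    · have := hlip.dist_le_mul x y
      rw [Real.dist_eq] at this
      simpa using this
    · have h1 := abs_le.1 (hM x)
      have h2 := abs_le.1 (hM y)
      rw [abs_sub_le_iff]
      constructor <;> linarith
  set I : X → ℝ≥0∞ := fun y => ∫⁻ x, ENNReal.ofReal |f x - f y| * ker μ s x y ∂μ with hI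
  have hwsem : wSeminorm μ s f = ∫⁻ y, I y ∂μ := rfl
  set K : ℝ≥0∞ := ENNReal.ofReal (Cμ * (2 * M) * (R ^ s)⁻¹ * (4 / s) +
      2 * Cμ * R ^ (1 - s) * (4 / (1 - s))) with hK
  have hinner : ∀ y, I y ≤ K :=
    fun y => inner_est μ hC hdoub hs hs1 (by positivity) y (hfb y) hR
  -- the outer annuli
  set J : ℕ → Set X :=
    fun n => {w | (2:ℝ) ^ (n+1) * R ≤ dist z w ∧ dist z w < 2 * ((2:ℝ) ^ (n+1) * R)} with hJ
  have huniv : (ball z (2 * R) ∪ ⋃ n, J n) = Set.univ := by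
    apply Set.eq_univ_of_forall
    intro w
    rcases lt_or_ge (dist z w) (2 * R) with hw | hw
    · left; rw [mem_ball, dist_comm]; exact hw
    · right
      have hd : 0 < dist z w := lt_of_lt_of_le (by positivity) hw
      obtain ⟨j, hj1, hj2⟩ := exists_dyadic hd hR
      have hj0 : 1 ≤ j := by
        by_contra hcon
        push_neg at hcon
        have hj1' : j + 1 ≤ 1 := by omega
        have : (2:ℝ) ^ (j+1) ≤ (2:ℝ) ^ (1:ℤ) :=
          zpow_le_zpow_right₀ (by norm_num) hj1'
        rw [zpow_one] at this
        nlinarith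
      set n : ℕ := (j - 1).toNat with hn
      have hjn : j = (n:ℤ) + 1 := by
        have : ((n:ℤ)) = j - 1 := Int.toNat_of_nonneg (by omega)
        omega
      have e1 : (2:ℝ) ^ j * R = (2:ℝ) ^ (n+1) * R := by
        rw [hjn, ← zpow_natCast (2:ℝ) (n+1)]
        push_cast
        ring_nf
      refine Set.mem_iUnion.2 ⟨n, ?_, ?_⟩
      · rw [← e1]; exact hj1
      · have e2 : (2:ℝ) ^ (j + 1) * R = 2 * ((2:ℝ) ^ (n+1) * R) := by
          rw [zpow_add_one₀ two_ne_zero]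
          linear_combination 2 * e1
        rw [← e2]; exact hj2
  -- tail estimate
  have htail : ∀ n : ℕ, ∫⁻ y in J n, I y ∂μ
      ≤ ENNReal.ofReal ((2*M) * Cμ^3 * (R ^ s)⁻¹ * ((2:ℝ) ^ (-s)) ^ n) * μ (ball z R) := by
    intro n
    have h2n : (1:ℝ) ≤ 2 ^ n := one_le_pow₀ (by norm_num)
    have hps : (2:ℝ) ^ (n+1) = 2 ^ n * 2 := pow_succ 2 n
    have hrn : (0:ℝ) < 2 ^ n * R := by positivity
    obtain ⟨hY0c, hYtc, _⟩ := hdoub z R hR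
    obtain ⟨hZ0, hZt, _⟩ := hdoub z (2 * ((2:ℝ)^(n+1) * R)) (by positivity)
    set c' : ℝ≥0∞ := ENNReal.ofReal (2*M) * (ENNReal.ofReal Cμ)^3 *
        (ENNReal.ofReal (((2:ℝ)^n * R) ^ s))⁻¹ * μ (ball z R) *
        (μ (ball z (2 * ((2:ℝ)^(n+1) * R))))⁻¹ with hc'
    have step1 : ∫⁻ y in J n, I y ∂μ ≤ c' * μ (J n) := by
      refine setLIntegral_le_of_forall_le μ _ _ c' fun y hy => ?_
      obtain ⟨hy1, hy2⟩ := hy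
      have hyout : y ∉ ball z R := by
        rw [mem_ball, dist_comm]
        push_neg
        nlinarith [mul_nonneg (sub_nonneg.2 h2n) hR.le]
      obtain ⟨hY0, hYt, _⟩ := hdoub y ((2:ℝ)^n * R) hrn
      set e : ℝ≥0∞ := ENNReal.ofReal (2*M) *
          (μ (ball y ((2:ℝ)^n * R)) * ENNReal.ofReal (((2:ℝ)^n * R) ^ s))⁻¹ with he
      have hpt : ∀ x, ENNReal.ofReal |f x - f y| * ker μ s x y
          ≤ (ball z R).indicator (fun _ => e) x := by
        intro x
        by_cases hx : x ∈ ball z R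
        · rw [Set.indicator_of_mem hx]
          refine mul_le_mul' ?_ ?_
          · exact ENNReal.ofReal_le_ofReal ((hfb y x).trans (min_le_right _ _))
          · refine ker_le μ hs y x hrn ?_
            have htri := dist_triangle z x y
            have hxz : dist z x < R := by rw [dist_comm]; exact mem_ball.1 hx
            have : dist x y ≥ dist z y - dist z x := by linarith
            rw [dist_comm]
            nlinarith [mul_nonneg (sub_nonneg.2 h2n) hR.le]
        · rw [Set.indicator_of_notMem hx, hconst x hx, hconst y hyout]
          simp
      have hIy : I y ≤ e * μ (ball z R) :=
        le_trans (lintegral_mono hpt) (lintegral_indicator_const_le _ _)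
      have hkey : (μ (ball y ((2:ℝ)^n * R)))⁻¹
          ≤ (ENNReal.ofReal Cμ)^3 * (μ (ball z (2 * ((2:ℝ)^(n+1) * R))))⁻¹ := by
        have hsub : ball z (2 * ((2:ℝ)^(n+1) * R))
            ⊆ ball y (2 * (2 * (2 * ((2:ℝ)^n * R)))) := by
          intro w hw
          rw [mem_ball] at hw ⊢
          have htri := dist_triangle w z y
          have := dist_comm z y
          nlinarith [hw, hy2, mul_nonneg (sub_nonneg.2 h2n) hR.le]
        have hd3 : μ (ball y (2 * (2 * (2 * ((2:ℝ)^n * R)))))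
            ≤ (ENNReal.ofReal Cμ)^3 * μ (ball y ((2:ℝ)^n * R)) := by
          have d1 := (hdoub y ((2:ℝ)^n * R) hrn).2.2
          have d2 := (hdoub y (2 * ((2:ℝ)^n * R)) (by positivity)).2.2
          have d3 := (hdoub y (2 * (2 * ((2:ℝ)^n * R))) (by positivity)).2.2
          calc μ (ball y (2 * (2 * (2 * ((2:ℝ)^n * R)))))
              ≤ ENNReal.ofReal Cμ * μ (ball y (2 * (2 * ((2:ℝ)^n * R)))) := d3
            _ ≤ ENNReal.ofReal Cμ * (ENNReal.ofReal Cμ * μ (ball y (2 * ((2:ℝ)^n * R)))) :=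
                mul_le_mul' le_rfl d2
            _ ≤ ENNReal.ofReal Cμ * (ENNReal.ofReal Cμ *
                  (ENNReal.ofReal Cμ * μ (ball y ((2:ℝ)^n * R)))) :=
                mul_le_mul' le_rfl (mul_le_mul' le_rfl d1)
            _ = (ENNReal.ofReal Cμ)^3 * μ (ball y ((2:ℝ)^n * R)) := by ring
        have hZle : μ (ball z (2 * ((2:ℝ)^(n+1) * R)))
            ≤ (ENNReal.ofReal Cμ)^3 * μ (ball y ((2:ℝ)^n * R)) :=
          le_trans (measure_mono hsub) hd3
        calc (μ (ball y ((2:ℝ)^n * R)))⁻¹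
            = (μ (ball z (2 * ((2:ℝ)^(n+1) * R))))⁻¹ * μ (ball z (2 * ((2:ℝ)^(n+1) * R))) *
                (μ (ball y ((2:ℝ)^n * R)))⁻¹ := by
              rw [ENNReal.inv_mul_cancel hZ0.ne' hZt.ne, one_mul]
          _ ≤ (μ (ball z (2 * ((2:ℝ)^(n+1) * R))))⁻¹ *
                ((ENNReal.ofReal Cμ)^3 * μ (ball y ((2:ℝ)^n * R))) *
                (μ (ball y ((2:ℝ)^n * R)))⁻¹ :=
              mul_le_mul' (mul_le_mul' le_rfl hZle) le_rfl
          _ = (ENNReal.ofReal Cμ)^3 * (μ (ball y ((2:ℝ)^n * R)) * (μ (ball y ((2:ℝ)^n * R)))⁻¹) *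
                (μ (ball z (2 * ((2:ℝ)^(n+1) * R))))⁻¹ := by ring
          _ = (ENNReal.ofReal Cμ)^3 * (μ (ball z (2 * ((2:ℝ)^(n+1) * R))))⁻¹ := by
              rw [ENNReal.mul_inv_cancel hY0.ne' hYt.ne, mul_one]
      calc I y ≤ e * μ (ball z R) := hIy
        _ = ENNReal.ofReal (2*M) * ((μ (ball y ((2:ℝ)^n * R)))⁻¹ *
              (ENNReal.ofReal (((2:ℝ)^n * R) ^ s))⁻¹) * μ (ball z R) := by
            rw [he, ENNReal.mul_inv (Or.inl hY0.ne') (Or.inl hYt.ne)]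
        _ ≤ ENNReal.ofReal (2*M) * (((ENNReal.ofReal Cμ)^3 *
              (μ (ball z (2 * ((2:ℝ)^(n+1) * R))))⁻¹) *
              (ENNReal.ofReal (((2:ℝ)^n * R) ^ s))⁻¹) * μ (ball z R) := by
            refine mul_le_mul' (mul_le_mul' le_rfl (mul_le_mul' hkey le_rfl)) le_rfl
        _ = c' := by rw [hc']; ring
    have step2 : μ (J n) ≤ μ (ball z (2 * ((2:ℝ)^(n+1) * R))) := by
      refine measure_mono fun w hw => ?_
      rw [mem_ball, dist_comm]
      exact hw.2
    calc ∫⁻ y in J n, I y ∂μ ≤ c' * μ (J n) := step1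
      _ ≤ c' * μ (ball z (2 * ((2:ℝ)^(n+1) * R))) := mul_le_mul' le_rfl step2
      _ = ENNReal.ofReal (2*M) * (ENNReal.ofReal Cμ)^3 *
            (ENNReal.ofReal (((2:ℝ)^n * R) ^ s))⁻¹ * μ (ball z R) *
            ((μ (ball z (2 * ((2:ℝ)^(n+1) * R))))⁻¹ * μ (ball z (2 * ((2:ℝ)^(n+1) * R)))) := by
          rw [hc']; ring
      _ = ENNReal.ofReal (2*M) * (ENNReal.ofReal Cμ)^3 *
            (ENNReal.ofReal (((2:ℝ)^n * R) ^ s))⁻¹ * μ (ball z R) := by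
          rw [ENNReal.inv_mul_cancel hZ0.ne' hZt.ne, mul_one]
      _ = ENNReal.ofReal ((2*M) * Cμ^3 * (R ^ s)⁻¹ * ((2:ℝ) ^ (-s)) ^ n) * μ (ball z R) := by
          congr 1
          have hRs : (0:ℝ) < R ^ s := Real.rpow_pos_of_pos hR s
          have hpow : (((2:ℝ) ^ n * R) ^ s)⁻¹ = ((2:ℝ) ^ (-s)) ^ n * (R ^ s)⁻¹ := by
            rw [Real.mul_rpow (by positivity) hR.le, two_pow_rpow n s, mul_inv, ← inv_pow,
              ← Real.rpow_neg (by norm_num : (0:ℝ) ≤ 2)]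
          rw [← ENNReal.ofReal_inv_of_pos (by positivity), hpow,
            ← ENNReal.ofReal_pow (by positivity : (0:ℝ) ≤ Cμ),
            ← ENNReal.ofReal_mul (by positivity), ← ENNReal.ofReal_mul (by positivity)]
          exact congrArg ENNReal.ofReal (by ring)
    -- geometric sum of the tail
  have hRs0 : (0:ℝ) < R ^ s := Real.rpow_pos_of_pos hR s
  have h2s : (0:ℝ) < (2:ℝ) ^ (-s) := Real.rpow_pos_of_pos two_pos _
  have hc0 : (0:ℝ) ≤ (2*M) * Cμ^3 * (R ^ s)⁻¹ := by positivity
  have h4s : (0:ℝ) ≤ 4/s := div_nonneg (by norm_num) hs.le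
  have h4s' : (0:ℝ) ≤ 4/(1-s) := div_nonneg (by norm_num) h1s.le
  have hgeom : ∑' n : ℕ, ENNReal.ofReal ((2*M) * Cμ^3 * (R ^ s)⁻¹ * ((2:ℝ) ^ (-s)) ^ n)
      ≤ ENNReal.ofReal ((2*M) * Cμ^3 * (R ^ s)⁻¹ * (4/s)) := by
    calc ∑' n : ℕ, ENNReal.ofReal ((2*M) * Cμ^3 * (R ^ s)⁻¹ * ((2:ℝ) ^ (-s)) ^ n)
        = ENNReal.ofReal ((2*M) * Cμ^3 * (R ^ s)⁻¹) *
            ∑' n : ℕ, (ENNReal.ofReal ((2:ℝ) ^ (-s))) ^ n := by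
          rw [← ENNReal.tsum_mul_left]
          congr 1 with n
          rw [← ENNReal.ofReal_pow h2s.le, ← ENNReal.ofReal_mul hc0]
      _ ≤ ENNReal.ofReal ((2*M) * Cμ^3 * (R ^ s)⁻¹) * ENNReal.ofReal (4/s) :=
          mul_le_mul' le_rfl (geom_sum_le hs hs1.le)
      _ = ENNReal.ofReal ((2*M) * Cμ^3 * (R ^ s)⁻¹ * (4/s)) := by
          rw [← ENNReal.ofReal_mul hc0]
  have hhead : ∫⁻ y in ball z (2*R), I y ∂μ ≤ K * (ENNReal.ofReal Cμ * μ (ball z R)) :=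
    le_trans (setLIntegral_le_of_forall_le μ _ _ K (fun y _ => hinner y))
      (mul_le_mul' le_rfl hBd)
  have hT1 : (0:ℝ) ≤ Cμ * (2 * M) * (R ^ s)⁻¹ * (4 / s) +
      2 * Cμ * R ^ (1 - s) * (4 / (1 - s)) := by
    have hr1 : (0:ℝ) ≤ R ^ (1-s) := (Real.rpow_pos_of_pos hR _).le
    have := mul_nonneg (mul_nonneg (mul_nonneg hC0.le (by positivity : (0:ℝ) ≤ 2*M))
      (by positivity : (0:ℝ) ≤ (R ^ s)⁻¹)) h4s
    have := mul_nonneg (mul_nonneg (by positivity : (0:ℝ) ≤ 2*Cμ) hr1) h4s'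
    linarith
  have hm1 : R ^ (1-s) ≤ max (R ^ (1 - s)) (M * R ^ (-s)) := le_max_left _ _
  have hm2 : M * R ^ (-s) ≤ max (R ^ (1 - s)) (M * R ^ (-s)) := le_max_right _ _
  have hm0 : (0:ℝ) ≤ max (R ^ (1 - s)) (M * R ^ (-s)) :=
    le_trans (Real.rpow_pos_of_pos hR _).le hm1
  have hss : (0:ℝ) < s * (1-s) := by nlinarith
  have hA : (0:ℝ) ≤ 100 * Cμ^3 / (s*(1-s)) * max (R ^ (1 - s)) (M * R ^ (-s)) :=
    mul_nonneg (div_nonneg (by positivity) hss.le) hm0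
  have hfinal := final_real hC hs hs1 hR hM0 hm1 hm2
  calc wSeminorm μ s f = ∫⁻ y, I y ∂μ := hwsem
    _ = ∫⁻ y in Set.univ, I y ∂μ := by rw [Measure.restrict_univ]
    _ = ∫⁻ y in ball z (2*R) ∪ ⋃ n, J n, I y ∂μ := by rw [huniv]
    _ ≤ ∫⁻ y in ball z (2*R), I y ∂μ + ∫⁻ y in ⋃ n, J n, I y ∂μ :=
        lintegral_union_le _ _ _
    _ ≤ ∫⁻ y in ball z (2*R), I y ∂μ + ∑' n, ∫⁻ y in J n, I y ∂μ :=
        add_le_add le_rfl (lintegral_iUnion_le _ _)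
    _ ≤ K * (ENNReal.ofReal Cμ * μ (ball z R)) +
          ∑' n : ℕ, ENNReal.ofReal ((2*M) * Cμ^3 * (R ^ s)⁻¹ * ((2:ℝ) ^ (-s)) ^ n) *
            μ (ball z R) :=
        add_le_add hhead (ENNReal.tsum_le_tsum htail)
    _ = (K * ENNReal.ofReal Cμ +
          (∑' n : ℕ, ENNReal.ofReal ((2*M) * Cμ^3 * (R ^ s)⁻¹ * ((2:ℝ) ^ (-s)) ^ n))) *
            μ (ball z R) := by
        rw [ENNReal.tsum_mul_right]; ring
    _ ≤ (ENNReal.ofReal ((Cμ * (2 * M) * (R ^ s)⁻¹ * (4 / s) +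
          2 * Cμ * R ^ (1 - s) * (4 / (1 - s))) * Cμ) +
          ENNReal.ofReal ((2*M) * Cμ^3 * (R ^ s)⁻¹ * (4/s))) * μ (ball z R) := by
        refine mul_le_mul' (add_le_add ?_ hgeom) le_rfl
        rw [hK, ENNReal.ofReal_mul hT1]
    _ = ENNReal.ofReal ((Cμ * (2 * M) * (R ^ s)⁻¹ * (4 / s) +
          2 * Cμ * R ^ (1 - s) * (4 / (1 - s))) * Cμ +
          (2*M) * Cμ^3 * (R ^ s)⁻¹ * (4/s)) * μ (ball z R) := by
        rw [ENNReal.ofReal_add (mul_nonneg hT1 hC0.le) (mul_nonneg hc0 h4s)]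
    _ ≤ ENNReal.ofReal (100 * Cμ^3 / (s*(1-s)) * max (R ^ (1 - s)) (M * R ^ (-s))) *
          μ (ball z R) :=
        mul_le_mul' (ENNReal.ofReal_le_ofReal hfinal) le_rfl
    _ = ENNReal.ofReal ((100 * Cμ ^ 3 / (s * (1 - s))) * (μ (ball z R)).toReal *
          max (R ^ (1 - s)) (M * R ^ (-s))) := by
        rw [show (100 * Cμ ^ 3 / (s * (1 - s))) * (μ (ball z R)).toReal *
              max (R ^ (1 - s)) (M * R ^ (-s))
            = (100 * Cμ^3 / (s*(1-s)) * max (R ^ (1 - s)) (M * R ^ (-s))) *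
              (μ (ball z R)).toReal from by ring,
          ENNReal.ofReal_mul hA, ENNReal.ofReal_toReal hBt.ne]
end

section
/- Let (X,d,μ) be a doubling metric measure space and let E ⊂ X be measurable with μ(E ∩ B(x,t)) > β μ(B(x,t)) for all sufficiently small t > 0 (for some fixed 0 < β < 1) and μ(E ∩ B(x,r₀)) ≤ β μ(B(x,r₀)) for some r₀ > 0. Define σ' := inf{ r' > 0 : μ(E ∩ B(x,r')) ≤ β μ(B(x,r')) }. Then 0 < σ' ≤ r₀, and there exists σ with σ' ≤ σ < (3/2)σ' such that β/C_μ ≤ μ(E ∩ B(x,σ))/μ(B(x,σ)) ≤ β. -/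
open MeasureTheory Metric
open scoped ENNReal

/-- Selection of an intermediate scale with pinched density: if `E` has density `> β` in
all sufficiently small balls `B(x,t)` and density `≤ β` in `B(x,r₀)`, and
`σ' = inf{r' > 0 : μ(E ∩ B(x,r')) ≤ β μ(B(x,r'))}`, then `0 < σ' ≤ r₀` and there is
`σ ∈ [σ', (3/2)σ')` with `β/C_μ ≤ μ(E ∩ B(x,σ))/μ(B(x,σ)) ≤ β`. -/
theorem stmt16 {X : Type*} [MetricSpace X] [MeasurableSpace X] (μ : Measure X)
    (Cμ : ℝ) (hC : 1 ≤ Cμ)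
    (hdoub : ∀ (y : X) (ρ : ℝ), 0 < ρ →
      0 < μ (ball y ρ) ∧ μ (ball y ρ) < ⊤ ∧
        μ (ball y (2 * ρ)) ≤ ENNReal.ofReal Cμ * μ (ball y ρ))
    (x : X) (E : Set X) (β r₀ : ℝ) (hβ : 0 < β) (hβ1 : β < 1) (hr₀ : 0 < r₀)
    (hsmall : ∃ t₀ > (0 : ℝ), ∀ t, 0 < t → t < t₀ →
      β * (μ (ball x t)).toReal < (μ (E ∩ ball x t)).toReal)
    (hr₀le : (μ (E ∩ ball x r₀)).toReal ≤ β * (μ (ball x r₀)).toReal) :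
    0 < sInf {r' : ℝ | 0 < r' ∧ (μ (E ∩ ball x r')).toReal ≤ β * (μ (ball x r')).toReal}
    ∧ sInf {r' : ℝ | 0 < r' ∧ (μ (E ∩ ball x r')).toReal ≤ β * (μ (ball x r')).toReal} ≤ r₀
    ∧ ∃ σ : ℝ,
        sInf {r' : ℝ | 0 < r' ∧ (μ (E ∩ ball x r')).toReal ≤ β * (μ (ball x r')).toReal} ≤ σ
        ∧ σ < (3 / 2) *
            sInf {r' : ℝ | 0 < r' ∧ (μ (E ∩ ball x r')).toReal ≤ β * (μ (ball x r')).toReal}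
        ∧ β / Cμ ≤ (μ (E ∩ ball x σ)).toReal / (μ (ball x σ)).toReal
        ∧ (μ (E ∩ ball x σ)).toReal / (μ (ball x σ)).toReal ≤ β := by
  obtain ⟨t₀, ht₀, hsm⟩ := hsmall
  set S := {r' : ℝ | 0 < r' ∧ (μ (E ∩ ball x r')).toReal ≤ β * (μ (ball x r')).toReal} with hS
  have hr₀S : r₀ ∈ S := ⟨hr₀, hr₀le⟩
  have hlb : ∀ r ∈ S, t₀ ≤ r := by
    intro r hr
    by_contra h
    push_neg at h
    exact absurd hr.2 (not_le.mpr (hsm r hr.1 h))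
  have hbdd : BddBelow S := ⟨t₀, hlb⟩
  have hne : S.Nonempty := ⟨r₀, hr₀S⟩
  have hinf_pos : 0 < sInf S := lt_of_lt_of_le ht₀ (le_csInf hne hlb)
  have hinf_le : sInf S ≤ r₀ := csInf_le hbdd hr₀S
  refine ⟨hinf_pos, hinf_le, ?_⟩
  have h32 : sInf S < (3 / 2) * sInf S := by nlinarith
  obtain ⟨σ, hσS, hσlt⟩ := exists_lt_of_csInf_lt hne h32
  have hσpos : 0 < σ := hσS.1
  have hσge : sInf S ≤ σ := csInf_le hbdd hσS
  -- ball measures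
  obtain ⟨hbσpos, hbσfin, -⟩ := hdoub x σ hσpos
  obtain ⟨hbhpos, hbhfin, hdb⟩ := hdoub x (σ / 2) (by linarith)
  rw [show 2 * (σ / 2) = σ by ring] at hdb
  have hbσpos' : 0 < (μ (ball x σ)).toReal := ENNReal.toReal_pos hbσpos.ne' hbσfin.ne
  have hEfin : μ (E ∩ ball x σ) < ⊤ :=
    lt_of_le_of_lt (measure_mono (Set.inter_subset_right)) hbσfin
  -- σ/2 not in S : density > β there
  have hhalf : σ / 2 ∉ S := by
    intro h
    have := csInf_le hbdd h
    linarith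
  have hhalfd : β * (μ (ball x (σ / 2))).toReal < (μ (E ∩ ball x (σ / 2))).toReal := by
    by_contra h
    exact hhalf ⟨by linarith, le_of_not_gt h⟩
  have hmono : (μ (E ∩ ball x (σ / 2))).toReal ≤ (μ (E ∩ ball x σ)).toReal := by
    apply ENNReal.toReal_mono hEfin.ne
    exact measure_mono (Set.inter_subset_inter_right _ (ball_subset_ball (by linarith)))
  have hdoubR : (μ (ball x σ)).toReal ≤ Cμ * (μ (ball x (σ / 2))).toReal := by
    have h1 : (μ (ball x σ)).toReal ≤ (ENNReal.ofReal Cμ * μ (ball x (σ / 2))).toReal := by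
      apply ENNReal.toReal_mono _ hdb
      exact (ENNReal.mul_lt_top ENNReal.ofReal_lt_top hbhfin).ne
    rwa [ENNReal.toReal_mul, ENNReal.toReal_ofReal (by linarith)] at h1
  refine ⟨σ, hσge, hσlt, ?_, ?_⟩
  · rw [div_le_div_iff₀ (by linarith) hbσpos']
    have hβC : β / Cμ * Cμ = β := div_mul_cancel₀ β (by linarith)
    nlinarith [div_nonneg hβ.le (by linarith : (0:ℝ) ≤ Cμ)]
  · rw [div_le_iff₀ hbσpos']
    linarith [hσS.2]
end

section
/- Let (X,d,μ) be a complete connected doubling metric measure space and 0 < s < 1. Suppose that for some x ∈ Ω ⊂ X open, a locally integrable function u on Ω satisfies the weak Harnack inequality: there are C > 0 and R > 0 with B(x,2R) ⋐ Ω such that for every t ∈ ℝ and every 0 < r < R, esssup_{B(x,r/2)} (t − u) ≤ C ⨍_{B(x,r)} (t − u)₊ dμ. If moreover u ≥ β a.e. on B(x,R) for some β ∈ ℝ, then for every real t ≤ u^∧(x) and every ε > 0 there exists ρ > 0 such that u ≥ t − 2Cε a.e. on B(x,ρ); consequently u^∧ is lower semicontinuous at x. -/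
open MeasureTheory Metric Filter
open scoped ENNReal

/-- The lower approximate limit `u^∧(x)` of a real-valued function `u`. -/
noncomputable def lowerApproxLimit {X : Type*} [MetricSpace X] [MeasurableSpace X]
    (μ : Measure X) (u : X → ℝ) (x : X) : EReal :=
  sSup ((fun t : ℝ => (t : EReal)) ''
    {t : ℝ | Tendsto (fun r : ℝ => μ {y ∈ ball x r | u y < t} / μ (ball x r))
      (nhdsWithin 0 (Set.Ioi 0)) (nhds 0)})

/-- If a locally integrable `u` satisfies the weak Harnack inequality near `x ∈ Ω` and is
bounded below a.e. on `B(x,R)`, then for every `t ≤ u^∧(x)` and `ε > 0` there is `ρ > 0`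
with `u ≥ t − 2Cε` a.e. on `B(x,ρ)`; consequently `u^∧` is lower semicontinuous at `x`. -/
theorem stmt18 {X : Type*} [MetricSpace X] [MeasurableSpace X] [BorelSpace X]
    [CompleteSpace X] [ConnectedSpace X]
    (μ : Measure X) (Cμ : ℝ) (hCμ : 1 ≤ Cμ)
    (hdoub : ∀ (y : X) (ρ : ℝ), 0 < ρ →
      0 < μ (ball y ρ) ∧ μ (ball y ρ) < ⊤ ∧
        μ (ball y (2 * ρ)) ≤ ENNReal.ofReal Cμ * μ (ball y ρ))
    (s : ℝ) (hs : 0 < s) (hs1 : s < 1)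
    (Ω : Set X) (hΩ : IsOpen Ω) (x : X) (hx : x ∈ Ω)
    (u : X → ℝ) (hu : LocallyIntegrableOn u Ω μ)
    (C R : ℝ) (hC : 0 < C) (hR : 0 < R)
    (hball : closedBall x (2 * R) ⊆ Ω)
    (hharnack : ∀ (t : ℝ) (r : ℝ), 0 < r → r < R →
      ∀ᵐ y ∂μ.restrict (ball x (r / 2)),
        t - u y ≤ C * ((∫ z in ball x r, max (t - u z) 0 ∂μ) / (μ (ball x r)).toReal))
    (β : ℝ) (hβ : ∀ᵐ y ∂μ.restrict (ball x R), β ≤ u y) :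
    (∀ t : ℝ, (t : EReal) ≤ lowerApproxLimit μ u x → ∀ ε > (0 : ℝ),
        ∃ ρ > (0 : ℝ), ∀ᵐ y ∂μ.restrict (ball x ρ), t - 2 * C * ε ≤ u y)
    ∧ LowerSemicontinuousAt (lowerApproxLimit μ u) x := by
  set f : ℝ → Prop := fun t =>
    Tendsto (fun r : ℝ => μ {y ∈ ball x r | u y < t} / μ (ball x r))
      (nhdsWithin 0 (Set.Ioi 0)) (nhds 0) with hf_def
  -- downward closedness
  have hdown : ∀ t' t'' : ℝ, t'' ≤ t' → f t' → f t'' := by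
    intro t' t'' hle ht'
    refine tendsto_of_tendsto_of_tendsto_of_le_of_le tendsto_const_nhds ht'
      (fun r => zero_le) (fun r => ?_)
    refine ENNReal.div_le_div_right (measure_mono ?_) _
    intro y hy
    exact ⟨hy.1, lt_of_lt_of_le hy.2 hle⟩
  have hmem : ∀ t : ℝ, (t : EReal) ≤ lowerApproxLimit μ u x → ∀ t'' : ℝ, t'' < t → f t'' := by
    intro t ht t'' htt
    have h1 : (t'' : EReal) < lowerApproxLimit μ u x :=
      lt_of_lt_of_le (by exact_mod_cast htt) ht
    rw [lowerApproxLimit, lt_sSup_iff] at h1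
    obtain ⟨e, he, hlt⟩ := h1
    obtain ⟨t', ht', rfl⟩ := he
    have hlt' : (t'' : EReal) < (t' : EReal) := by simpa using hlt
    exact hdown t' t'' (le_of_lt (by exact_mod_cast hlt')) ht'
  have main : ∀ t : ℝ, (t : EReal) ≤ lowerApproxLimit μ u x → ∀ ε > (0 : ℝ),
      ∃ ρ > (0 : ℝ), ∀ᵐ y ∂μ.restrict (ball x ρ), t - 2 * C * ε ≤ u y := by
    intro t ht ε hε
    have hf := hmem t ht (t - ε) (by linarith)
    set M : ℝ := max (t - β) 0 with hM
    have hM0 : 0 ≤ M := le_max_right _ _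
    have hδpos : (0:ℝ) < ε / (M + 1) := by positivity
    have hev1 := (ENNReal.tendsto_nhds_zero.mp hf) (ENNReal.ofReal (ε / (M + 1)))
      (by simpa using ENNReal.ofReal_pos.mpr hδpos)
    have hev2 : ∀ᶠ r in nhdsWithin (0:ℝ) (Set.Ioi 0), r < R :=
      eventually_nhdsWithin_of_eventually_nhds (Filter.Tendsto.eventually_lt_const hR tendsto_id)
    have hev3 : ∀ᶠ r in nhdsWithin (0:ℝ) (Set.Ioi 0), (0:ℝ) < r :=
      eventually_mem_nhdsWithin
    obtain ⟨r, h1, h2, h3⟩ := (hev1.and (hev2.and hev3)).exists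
    refine ⟨r / 2, by linarith, ?_⟩
    set B : Set X := ball x r with hB
    obtain ⟨hBpos, hBfin, -⟩ := hdoub x r h3
    set S : Set X := {y ∈ B | u y < t - ε} with hS
    have hSB : S ⊆ B := fun y hy => hy.1
    have hSfin : μ S ≠ ⊤ := (lt_of_le_of_lt (measure_mono hSB) hBfin).ne
    set A : Set X := toMeasurable μ S with hA
    have hAmeas : MeasurableSet A := measurableSet_toMeasurable μ S
    have hβ' : ∀ᵐ y ∂μ.restrict B, β ≤ u y :=
      ae_restrict_of_ae_restrict_of_subset (ball_subset_ball h2.le) hβ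
    have hpt : ∀ᵐ y ∂μ.restrict B,
        max (t - u y) 0 ≤ ε + A.indicator (fun _ => M) y := by
      filter_upwards [hβ', ae_restrict_mem measurableSet_ball] with y hy hyB
      by_cases h : u y < t - ε
      · rw [Set.indicator_of_mem (subset_toMeasurable μ S ⟨hyB, h⟩)]
        have h2' : max (t - u y) 0 ≤ M :=
          max_le_max (by linarith) le_rfl
        linarith
      · push_neg at h
        have h3' : max (t - u y) 0 ≤ ε := max_le (by linarith) hε.le
        have h4' : (0:ℝ) ≤ A.indicator (fun _ => M) y :=
          Set.indicator_nonneg (fun _ _ => hM0) y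
        linarith
    have hconst_int : Integrable (fun _ : X => ε) (μ.restrict B) := by
      rw [integrable_const_iff]
      right
      exact ⟨by simpa [Measure.restrict_apply_univ] using hBfin⟩
    have hind_int : Integrable (A.indicator fun _ => M) (μ.restrict B) := by
      refine Integrable.indicator ?_ hAmeas
      rw [integrable_const_iff]
      right
      exact ⟨by simpa [Measure.restrict_apply_univ] using hBfin⟩
    have hI : (∫ z in B, max (t - u z) 0 ∂μ) ≤
        ε * (μ B).toReal + M * (μ.restrict B A).toReal := by
      have hmono := integral_mono_of_nonneg
        (Eventually.of_forall fun y => le_max_right _ _) (hconst_int.add hind_int) hpt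
      calc (∫ z in B, max (t - u z) 0 ∂μ)
          ≤ ∫ y in B, (ε + A.indicator (fun _ => M) y) ∂μ := hmono
        _ = (∫ _ in B, ε ∂μ) + ∫ y in B, A.indicator (fun _ => M) y ∂μ :=
            integral_add hconst_int hind_int
        _ = ε * (μ B).toReal + M * (μ.restrict B A).toReal := by
            rw [setIntegral_const, integral_indicator_const _ hAmeas]
            simp [smul_eq_mul]
            simp only [Measure.real]
            ring
    have hSA : (μ.restrict B A).toReal ≤ (μ S).toReal := by
      refine ENNReal.toReal_mono hSfin ?_
      calc μ.restrict B A ≤ μ A := Measure.restrict_le_self A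
        _ = μ S := measure_toMeasurable S
    have hμS : (μ S).toReal ≤ (ε / (M + 1)) * (μ B).toReal := by
      have h4 : μ S ≤ ENNReal.ofReal (ε / (M + 1)) * μ B :=
        (ENNReal.div_le_iff_le_mul (Or.inl hBpos.ne') (Or.inl hBfin.ne)).mp h1
      have h5 : (ENNReal.ofReal (ε / (M + 1)) * μ B).toReal
          = (ε / (M + 1)) * (μ B).toReal := by
        rw [ENNReal.toReal_mul, ENNReal.toReal_ofReal hδpos.le]
      rw [← h5]
      exact ENNReal.toReal_mono (by
        exact ENNReal.mul_ne_top ENNReal.ofReal_ne_top hBfin.ne) h4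
    have hBR : (0:ℝ) < (μ B).toReal := ENNReal.toReal_pos hBpos.ne' hBfin.ne
    have hItot : (∫ z in B, max (t - u z) 0 ∂μ) ≤ 2 * ε * (μ B).toReal := by
      have hMε : M * ((ε / (M + 1)) * (μ B).toReal) ≤ ε * (μ B).toReal := by
        rw [div_mul_eq_mul_div, mul_div_assoc']
        rw [div_le_iff₀ (by linarith)]
        nlinarith [hBR.le]
      have : M * (μ.restrict B A).toReal ≤ M * ((ε / (M + 1)) * (μ B).toReal) := by
        apply mul_le_mul_of_nonneg_left (le_trans hSA hμS) hM0
      linarith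
    have hdiv : (∫ z in B, max (t - u z) 0 ∂μ) / (μ B).toReal ≤ 2 * ε := by
      rw [div_le_iff₀ hBR]
      linarith
    filter_upwards [hharnack t r h3 h2] with y hy
    have : C * ((∫ z in B, max (t - u z) 0 ∂μ) / (μ B).toReal) ≤ C * (2 * ε) :=
      mul_le_mul_of_nonneg_left hdiv hC.le
    nlinarith
  refine ⟨main, ?_⟩
  intro b hb
  rw [lowerApproxLimit, gt_iff_lt, lt_sSup_iff] at hb
  obtain ⟨e, he, hbe⟩ := hb
  obtain ⟨t, htf, rfl⟩ := he
  -- pick reals b'' < b' < t with b < b''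
  have hex : ∀ a : EReal, ∀ c : ℝ, a < (c : EReal) → ∃ d : ℝ, a < (d : EReal) ∧ d < c := by
    intro a c hac
    obtain ⟨d, hd1, hd2⟩ := exists_between hac
    induction d using EReal.rec with
    | bot => exact absurd hd1 (by simp)
    | coe d => exact ⟨d, hd1, by exact_mod_cast hd2⟩
    | top => exact absurd hd2 (not_lt.mpr le_top)
  obtain ⟨b', hb'1, hb'2⟩ := hex b t hbe
  obtain ⟨b'', hb''1, hb''2⟩ := hex b b' hb'1
  have ht_le : (t : EReal) ≤ lowerApproxLimit μ u x :=
    le_sSup ⟨t, htf, rfl⟩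
  have hεpos : (0:ℝ) < (t - b') / (2 * C) := div_pos (by linarith) (by linarith)
  obtain ⟨ρ, hρ, hae⟩ := main t ht_le ((t - b') / (2 * C)) hεpos
  have hkey : t - 2 * C * ((t - b') / (2 * C)) = b' := by field_simp; ring
  rw [hkey] at hae
  have hnull : μ ({y | u y < b'} ∩ ball x ρ) = 0 := by
    rw [← Measure.restrict_apply' measurableSet_ball]
    have h0 := ae_iff.mp hae
    simpa [not_le] using h0
  filter_upwards [ball_mem_nhds x (half_pos hρ)] with z hz
  show b < lowerApproxLimit μ u z
  have hb''mem : Tendsto (fun r : ℝ => μ {y ∈ ball z r | u y < b''} / μ (ball z r))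
      (nhdsWithin 0 (Set.Ioi 0)) (nhds 0) := by
    have hevρ : ∀ᶠ r in nhdsWithin (0:ℝ) (Set.Ioi 0), r < ρ / 2 :=
      eventually_nhdsWithin_of_eventually_nhds
        (Filter.Tendsto.eventually_lt_const (half_pos hρ) tendsto_id)
    have hev : ∀ᶠ r in nhdsWithin (0:ℝ) (Set.Ioi 0),
        μ {y ∈ ball z r | u y < b''} / μ (ball z r) = 0 := by
      filter_upwards [hevρ] with r hr
      have hsub : {y ∈ ball z r | u y < b''} ⊆ {y | u y < b'} ∩ ball x ρ := by
        intro y hy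
        refine ⟨lt_trans hy.2 hb''2, ?_⟩
        have hd1 : dist y z < r := mem_ball.mp hy.1
        have hd2 : dist z x < ρ / 2 := mem_ball.mp hz
        have : dist y x ≤ dist y z + dist z x := dist_triangle y z x
        exact mem_ball.mpr (by linarith)
      have hz0 : μ {y ∈ ball z r | u y < b''} = 0 := measure_mono_null hsub hnull
      rw [hz0, ENNReal.zero_div]
    exact (tendsto_congr' (hev.mono fun r h => h.symm)).mp tendsto_const_nhds
  calc b < (b'' : EReal) := hb''1
    _ ≤ lowerApproxLimit μ u z := le_sSup ⟨b'', hb''mem, rfl⟩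
end
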